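/- arXiv:1612.06618 — 2 statements merged into one kernel-verified Lean document; each statement's English description precedes it below -/
import Mathlib

section
/- Let h : ℝ → ℝ be differentiable on ℝ with bounded derivative. Then as α → ∞, E[h((X_α − α)/√α)] = E[h(Z)] + O(α^(−1/2)), where X_α has the Poisson distribution with mean α and Z is standard normal. Precisely: there exist constants C > 0 and A > 0 (depending only on h) such that for all α ≥ A, |Σ_{n=0}^∞ e^(−α)·α^n/n! · h((n−α)/√α) − ∫_ℝ h(z) dγ(z)| ≤ C·α^(−1/2), where γ is the standard Gaussian measure N(0,1) on ℝ. -/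
open scoped BigOperators
open MeasureTheory Real Set Filter intervalIntegral

section PoissonNormalAux

noncomputable def gphi (t : ℝ) : ℝ := Real.exp (-t ^ 2 / 2)

lemma gphi_pos (t : ℝ) : 0 < gphi t := Real.exp_pos _
lemma gphi_cont : Continuous gphi := by unfold gphi; continuity

lemma gphi_integrable : Integrable gphi := by
  have := integrable_exp_neg_mul_sq (b := (1/2:ℝ)) (by norm_num)
  convert this using 2 with t
  unfold gphi; ring_nf

lemma gphi_mul_integrable : Integrable (fun t : ℝ => t * gphi t) := by
  have := integrable_mul_exp_neg_mul_sq (b := (1/2:ℝ)) (by norm_num)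
  convert this using 2 with t
  unfold gphi; ring_nf

lemma gphi_abs_mul_integrable : Integrable (fun t : ℝ => |t| * gphi t) := by
  refine gphi_mul_integrable.abs.congr (Eventually.of_forall fun t => ?_)
  simp only [abs_mul, abs_of_nonneg (gphi_pos t).le]

lemma gphi_lin_integrable (a b : ℝ) : Integrable (fun t : ℝ => (a + b * |t|) * gphi t) := by
  have : (fun t : ℝ => (a + b * |t|) * gphi t)
      = fun t => a * gphi t + b * (|t| * gphi t) := by funext t; ring
  rw [this]
  exact (gphi_integrable.const_mul a).add (gphi_abs_mul_integrable.const_mul b)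

lemma integral_gphi : ∫ t : ℝ, gphi t = Real.sqrt (2 * π) := by
  have := integral_gaussian (1/2 : ℝ)
  rw [show √(π / (1/2)) = √(2*π) by ring_nf] at this
  rw [← this]
  congr 1 with t
  unfold gphi; ring_nf

lemma gphi_tendsto : Tendsto gphi atTop (nhds 0) := by
  unfold gphi
  apply Real.tendsto_exp_atBot.comp
  have : Tendsto (fun t : ℝ => t ^ 2 / 2) atTop atTop :=
    (tendsto_pow_atTop two_ne_zero).atTop_div_const (by norm_num)
  have h2 : Tendsto (fun t : ℝ => -(t ^ 2 / 2)) atTop atBot := tendsto_neg_atBot_iff.mpr this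
  exact h2.congr (fun t => by ring)
  
lemma hasDerivAt_neg_gphi (t : ℝ) : HasDerivAt (fun t => -gphi t) (t * gphi t) t := by
  have h1 : HasDerivAt (fun t : ℝ => -t^2/2) (-t) t := by
    have := ((hasDerivAt_pow 2 t : HasDerivAt (fun x : ℝ => x ^ 2) _ t).div_const 2).fun_neg
    rw [show (fun t : ℝ => -t ^ 2 / 2) = fun i => -(i ^ 2 / 2) from funext fun x => by ring]
    exact this.congr_deriv (by norm_num)
  have := (h1.exp).fun_neg
  exact this.congr_deriv (by unfold gphi; ring)

/-- ∫_{Ioi x} t φ t = φ x -/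
lemma tail_mul (x : ℝ) : ∫ t in Ioi x, t * gphi t = gphi x := by
  have := integral_Ioi_of_hasDerivAt_of_tendsto (f := fun t => -gphi t)
    (f' := fun t => t * gphi t) (a := x) (m := 0)
    (gphi_cont.neg.continuousWithinAt) (fun t _ => hasDerivAt_neg_gphi t)
    (gphi_mul_integrable.integrableOn) (by simpa using gphi_tendsto.neg)
  simpa using this

lemma gphi_neg (t : ℝ) : gphi (-t) = gphi t := by unfold gphi; rw [neg_pow]; ring_nf

lemma hasDerivAt_psi (t : ℝ) :
    HasDerivAt (fun t : ℝ => t / (1 + t ^ 2) * gphi t)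
      (-((1 - 2 / (1 + t ^ 2) ^ 2) * gphi t)) t := by
  have hne : (1 + t ^ 2) ≠ 0 := by positivity
  have h1 : HasDerivAt (fun t : ℝ => t / (1 + t ^ 2))
      ((1 * (1 + t ^ 2) - t * (2 * t)) / (1 + t ^ 2) ^ 2) t := by
    have ha : HasDerivAt (fun t : ℝ => t) 1 t := hasDerivAt_id t
    have hb : HasDerivAt (fun t : ℝ => 1 + t ^ 2) (2 * t) t := by
      simpa using (hasDerivAt_pow 2 t).const_add 1
    exact ha.div hb hne
  have h2 : HasDerivAt gphi (-(t * gphi t)) t := by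
    have := (hasDerivAt_neg_gphi t).fun_neg
    simpa using this
  have := h1.fun_mul h2
  refine this.congr_deriv ?_
  have h3 : (1+t^2)^2 ≠ 0 := by positivity
  field_simp
  ring

lemma D_integrable : Integrable (fun t : ℝ => (1 - 2 / (1 + t ^ 2) ^ 2) * gphi t) := by
  refine gphi_integrable.mono' ?_ (Eventually.of_forall fun t => ?_)
  · exact (((continuous_const.sub (continuous_const.div
      (by continuity) (fun t => by positivity)))).mul gphi_cont).aestronglyMeasurable
  · rw [Real.norm_eq_abs, abs_mul, abs_of_nonneg (gphi_pos t).le]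
    have h1 : (0:ℝ) ≤ 2 / (1 + t ^ 2) ^ 2 := by positivity
    have h2 : 2 / (1 + t ^ 2) ^ 2 ≤ 2 := by
      apply div_le_self (by norm_num)
      nlinarith [sq_nonneg t, sq_nonneg (t^2)]
    have : |1 - 2 / (1 + t ^ 2) ^ 2| ≤ 1 := by
      rw [abs_le]; constructor <;> linarith
    calc |1 - 2 / (1 + t ^ 2) ^ 2| * gphi t ≤ 1 * gphi t :=
          mul_le_mul_of_nonneg_right this (gphi_pos t).le
      _ = gphi t := one_mul _

lemma psi_tendsto : Tendsto (fun t : ℝ => t / (1 + t ^ 2) * gphi t) atTop (nhds 0) := by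
  refine squeeze_zero_norm (fun t => ?_) gphi_tendsto
  rw [Real.norm_eq_abs, abs_mul, abs_of_nonneg (gphi_pos t).le]
  have h1 : |t / (1 + t ^ 2)| ≤ 1 := by
    rw [abs_div, abs_of_pos (show (0:ℝ) < 1 + t^2 by positivity), div_le_one (by positivity)]
    nlinarith [abs_nonneg t, sq_abs t, sq_nonneg (|t| - 1)]
  calc |t / (1 + t ^ 2)| * gphi t ≤ 1 * gphi t :=
        mul_le_mul_of_nonneg_right h1 (gphi_pos t).le
    _ = gphi t := one_mul _

lemma tail_lower (x : ℝ) : x / (1 + x ^ 2) * gphi x ≤ ∫ t in Ioi x, gphi t := by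
  have key : ∫ t in Ioi x, (1 - 2 / (1 + t ^ 2) ^ 2) * gphi t
      = x / (1 + x ^ 2) * gphi x := by
    have := integral_Ioi_of_hasDerivAt_of_tendsto
      (f := fun t : ℝ => -(t / (1 + t ^ 2) * gphi t))
      (f' := fun t : ℝ => (1 - 2 / (1 + t ^ 2) ^ 2) * gphi t) (a := x) (m := 0)
      (by
        apply Continuous.continuousWithinAt
        exact ((continuous_id.div (by continuity) (fun t => by positivity)).mul gphi_cont).neg)
      (fun t _ => by simpa using (hasDerivAt_psi t).fun_neg)
      (D_integrable.integrableOn) (by simpa using psi_tendsto.neg)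
    simpa using this
  rw [← key]
  apply setIntegral_mono_on D_integrable.integrableOn gphi_integrable.integrableOn
    measurableSet_Ioi
  intro t _
  nlinarith [gphi_pos t, div_nonneg (show (0:ℝ) ≤ 2 by norm_num)
    (show (0:ℝ) ≤ (1+t^2)^2 by positivity)]

lemma tail_upper {x : ℝ} (hx : 0 < x) : ∫ t in Ioi x, gphi t ≤ gphi x / x := by
  have : ∫ t in Ioi x, gphi t ≤ ∫ t in Ioi x, t * gphi t / x := by
    apply setIntegral_mono_on gphi_integrable.integrableOn
      ((gphi_mul_integrable.div_const x).integrableOn) measurableSet_Ioi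
    intro t ht
    rw [mem_Ioi] at ht
    rw [le_div_iff₀ hx]
    nlinarith [gphi_pos t]
  calc ∫ t in Ioi x, gphi t ≤ ∫ t in Ioi x, t * gphi t / x := this
    _ = (∫ t in Ioi x, t * gphi t) / x := integral_div x _
    _ = gphi x / x := by rw [tail_mul]

lemma tail_le_total (x : ℝ) : ∫ t in Ioi x, gphi t ≤ Real.sqrt (2 * π) := by
  rw [← integral_gphi]
  exact setIntegral_le_integral gphi_integrable (Eventually.of_forall fun t => (gphi_pos t).le)

lemma tail_nonneg (x : ℝ) : 0 ≤ ∫ t in Ioi x, gphi t :=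
  setIntegral_nonneg measurableSet_Ioi (fun t _ => (gphi_pos t).le)

lemma tail_sub (x : ℝ) : ∫ t in Ioi x, (t - x) * gphi t
    = gphi x - x * ∫ t in Ioi x, gphi t := by
  have : ∀ t : ℝ, (t - x) * gphi t = t * gphi t - x * gphi t := fun t => by ring
  simp_rw [this]
  rw [integral_sub gphi_mul_integrable.integrableOn
    ((gphi_integrable.const_mul x).integrableOn), tail_mul, MeasureTheory.integral_const_mul]

lemma exp_mul_gphi (x : ℝ) : Real.exp (x ^ 2 / 2) * gphi x = 1 := by
  unfold gphi; rw [← Real.exp_add]; ring_nf; exact Real.exp_zero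

set_option maxHeartbeats 1000000 in
lemma steinBound_core (L K x Q E gx : ℝ) (hL : 0 ≤ L) (hK : 0 ≤ K) (hx : 0 ≤ x)
    (hQ0 : 0 ≤ Q)
    (hQlow : x / (1 + x ^ 2) ≤ Real.exp (x ^ 2 / 2) * Q)
    (hQhigh : 0 < x → Real.exp (x ^ 2 / 2) * Q ≤ 1 / x)
    (hQtot : Q ≤ Real.sqrt (2 * π))
    (hgx : |gx| ≤ K + L * x)
    (hE : |E| ≤ L * (gphi x - x * Q)) :
    |gx * (x - (1 + x ^ 2) * (Real.exp (x ^ 2 / 2) * Q))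
        - (1 + x ^ 2) * Real.exp (x ^ 2 / 2) * E|
      ≤ L + (K + L) * (1 + 2 * Real.exp 1 * Real.sqrt (2 * π)) := by
  set R : ℝ := Real.exp (x ^ 2 / 2) * Q with hRdef
  have hex : (0:ℝ) < Real.exp (x ^ 2 / 2) := Real.exp_pos _
  have hexg : Real.exp (x ^ 2 / 2) * gphi x = 1 := exp_mul_gphi x
  have hR0 : 0 ≤ R := by positivity
  have hR1 : x ≤ (1 + x ^ 2) * R := by
    have hden : (0:ℝ) < 1 + x ^ 2 := by positivity
    rw [hRdef]
    calc x = (1 + x^2) * (x / (1 + x^2)) := by field_simp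
      _ ≤ (1 + x ^ 2) * (Real.exp (x ^ 2 / 2) * Q) :=
          mul_le_mul_of_nonneg_left hQlow hden.le
  have hterm2 : |(1 + x ^ 2) * Real.exp (x ^ 2 / 2) * E| ≤ L := by
    have hfac : (0:ℝ) ≤ (1 + x ^ 2) * Real.exp (x ^ 2 / 2) := by positivity
    rw [abs_mul, abs_of_nonneg hfac]
    have h1 : Real.exp (x^2/2) * (gphi x - x * Q) = 1 - x * R := by
      rw [hRdef, mul_sub, hexg]; ring
    have h2 : (1 + x^2) * (1 - x * R) ≤ 1 := by nlinarith
    calc (1 + x ^ 2) * Real.exp (x ^ 2 / 2) * |E|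
        ≤ (1 + x ^ 2) * Real.exp (x ^ 2 / 2) * (L * (gphi x - x * Q)) :=
          mul_le_mul_of_nonneg_left hE hfac
      _ = L * ((1 + x^2) * (Real.exp (x^2/2) * (gphi x - x * Q))) := by ring
      _ = L * ((1 + x^2) * (1 - x * R)) := by rw [h1]
      _ ≤ L * 1 := mul_le_mul_of_nonneg_left h2 hL
      _ = L := mul_one L
  have hsq : (0:ℝ) ≤ Real.sqrt (2*π) := Real.sqrt_nonneg _
  have he1 : (1:ℝ) ≤ Real.exp 1 := by have := Real.add_one_le_exp 1; linarith
  have hterm1 : |gx * (x - (1 + x ^ 2) * R)|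
      ≤ (K + L) * (1 + 2 * Real.exp 1 * Real.sqrt (2 * π)) := by
    have habs : |x - (1 + x ^ 2) * R| = (1 + x ^ 2) * R - x := by
      rw [abs_of_nonpos (by linarith)]; ring
    rw [abs_mul, habs]
    rcases le_or_gt x 1 with hx1 | hx1
    · have hRle : R ≤ Real.exp 1 * Real.sqrt (2 * π) := by
        have h2 : Real.exp (x^2/2) ≤ Real.exp 1 := by
          apply Real.exp_le_exp.mpr; nlinarith
        rw [hRdef]
        exact mul_le_mul h2 hQtot hQ0 (by positivity)
      have hgxb : |gx| ≤ K + L := by nlinarith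
      have hfacb : (1 + x ^ 2) * R - x ≤ 2 * Real.exp 1 * Real.sqrt (2*π) := by
        have hp1 : (1 + x ^ 2) * R ≤ (1 + x ^ 2) * (Real.exp 1 * Real.sqrt (2*π)) :=
          mul_le_mul_of_nonneg_left hRle (by positivity)
        have hp2 : (1 + x ^ 2) * (Real.exp 1 * Real.sqrt (2*π))
            ≤ 2 * (Real.exp 1 * Real.sqrt (2*π)) := by
          apply mul_le_mul_of_nonneg_right (by nlinarith) (by positivity)
        nlinarith
      have hfac0 : 0 ≤ (1 + x ^ 2) * R - x := by linarith
      have hc1 : |gx| * ((1 + x ^ 2) * R - x) ≤ (K + L) * (2 * Real.exp 1 * Real.sqrt (2*π)) :=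
        mul_le_mul hgxb hfacb hfac0 (by linarith)
      nlinarith
    · have hRle : R ≤ 1 / x := hQhigh (lt_trans one_pos hx1)
      have hfacb : (1 + x ^ 2) * R - x ≤ 1 / x := by
        have h0 : (1 + x^2) * R ≤ (1 + x^2) * (1/x) :=
          mul_le_mul_of_nonneg_left hRle (by positivity)
        have h2 : (1 + x^2) * (1/x) - x = 1/x := by field_simp; ring
        linarith
      have hfac0 : 0 ≤ (1 + x ^ 2) * R - x := by linarith
      have h5 : |gx| * ((1 + x ^ 2) * R - x) ≤ (K + L * x) * (1 / x) :=
        mul_le_mul hgx hfacb hfac0 (by positivity)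
      have h3 : (K + L * x) * (1 / x) ≤ K + L := by
        rw [mul_one_div, div_le_iff₀ (by linarith)]
        nlinarith
      have h4 : (K + L : ℝ) ≤ (K + L) * (1 + 2 * Real.exp 1 * Real.sqrt (2 * π)) := by
        have hpos : (0:ℝ) ≤ 2 * Real.exp 1 * Real.sqrt (2*π) := by positivity
        nlinarith [mul_nonneg (add_nonneg hK hL) hpos]
      linarith
  calc |gx * (x - (1 + x ^ 2) * R) - (1 + x ^ 2) * Real.exp (x ^ 2 / 2) * E|
      ≤ |gx * (x - (1 + x ^ 2) * R)| + |(1 + x ^ 2) * Real.exp (x ^ 2 / 2) * E| :=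
        by rw [sub_eq_add_neg]; exact (abs_add_le _ _).trans (by rw [abs_neg])
    _ ≤ (K + L) * (1 + 2 * Real.exp 1 * Real.sqrt (2 * π)) + L := by linarith
    _ = L + (K + L) * (1 + 2 * Real.exp 1 * Real.sqrt (2 * π)) := by ring

set_option maxHeartbeats 1000000 in
lemma steinBound (g : ℝ → ℝ) (L K : ℝ) (hL : 0 ≤ L) (hK : 0 ≤ K)
    (hlip : ∀ s t, |g s - g t| ≤ L * |s - t|)
    (hgb : ∀ t, |g t| ≤ K + L * |t|)
    (hint : Integrable (fun t => g t * gphi t))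
    (htot : ∫ t : ℝ, g t * gphi t = 0) :
    ∀ x : ℝ, 0 ≤ x →
      |(1 + x ^ 2) * Real.exp (x ^ 2 / 2) * (∫ t in Iic x, g t * gphi t) + x * g x|
        ≤ L + (K + L) * (1 + 2 * Real.exp 1 * Real.sqrt (2 * π)) := by
  intro x hx
  have hex : (0:ℝ) < Real.exp (x ^ 2 / 2) := Real.exp_pos _
  have hexg : Real.exp (x ^ 2 / 2) * gphi x = 1 := exp_mul_gphi x
  have hIic : ∫ t in Iic x, g t * gphi t = -(∫ t in Ioi x, g t * gphi t) := by
    have h := integral_Iic_add_Ioi (μ := volume) (f := fun t => g t * gphi t) (b := x)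
      hint.integrableOn hint.integrableOn
    rw [htot] at h
    linarith
  have hi1 : IntegrableOn (fun t => (g t - g x) * gphi t) (Ioi x) := by
    refine (hint.sub (gphi_integrable.const_mul (g x))).integrableOn.congr_fun
      (fun t _ => ?_) measurableSet_Ioi
    simp only [Pi.sub_apply]; ring
  have hsplit : (∫ t in Ioi x, g t * gphi t)
      = g x * (∫ t in Ioi x, gphi t) + ∫ t in Ioi x, (g t - g x) * gphi t := by
    have h1 : ∀ t : ℝ, g t * gphi t = g x * gphi t + (g t - g x) * gphi t := fun t => by ring
    rw [← MeasureTheory.integral_const_mul, ← integral_add ((gphi_integrable.const_mul (g x)).integrableOn) hi1]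
    exact setIntegral_congr_fun measurableSet_Ioi (fun t _ => h1 t)
  have hEbound : |∫ t in Ioi x, (g t - g x) * gphi t|
      ≤ L * (gphi x - x * ∫ t in Ioi x, gphi t) := by
    have hi2 : IntegrableOn (fun t => L * ((t - x) * gphi t)) (Ioi x) := by
      refine (Integrable.const_mul ?_ L).integrableOn
      refine (gphi_mul_integrable.sub (gphi_integrable.const_mul x)).congr
        (Eventually.of_forall fun t => ?_)
      simp only [Pi.sub_apply]; ring
    calc |∫ t in Ioi x, (g t - g x) * gphi t| ≤ ∫ t in Ioi x, |(g t - g x) * gphi t| := by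
          simpa only [Real.norm_eq_abs] using
            MeasureTheory.norm_integral_le_integral_norm (μ := volume.restrict (Ioi x))
              (f := fun t => (g t - g x) * gphi t)
      _ ≤ ∫ t in Ioi x, L * ((t - x) * gphi t) := by
          apply setIntegral_mono_on hi1.abs hi2 measurableSet_Ioi
          intro t ht
          rw [mem_Ioi] at ht
          rw [abs_mul, abs_of_nonneg (gphi_pos t).le]
          have h2 := hlip t x
          rw [abs_of_nonneg (by linarith : (0:ℝ) ≤ t - x)] at h2
          have h3 : L * ((t - x) * gphi t) = (L * (t - x)) * gphi t := by ring
          rw [h3]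
          exact mul_le_mul_of_nonneg_right h2 (gphi_pos t).le
      _ = L * (gphi x - x * ∫ t in Ioi x, gphi t) := by
          rw [MeasureTheory.integral_const_mul, tail_sub]
  have hQlow : x / (1 + x ^ 2) ≤ Real.exp (x ^ 2 / 2) * ∫ t in Ioi x, gphi t := by
    have h := mul_le_mul_of_nonneg_left (tail_lower x) hex.le
    calc x / (1 + x ^ 2) = Real.exp (x^2/2) * (x / (1 + x^2) * gphi x) := by
          rw [show Real.exp (x^2/2) * (x/(1+x^2) * gphi x)
            = x/(1+x^2) * (Real.exp (x^2/2) * gphi x) from by ring, hexg, mul_one]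
      _ ≤ Real.exp (x ^ 2 / 2) * ∫ t in Ioi x, gphi t := h
  have hQhigh : 0 < x → Real.exp (x ^ 2 / 2) * (∫ t in Ioi x, gphi t) ≤ 1 / x := by
    intro hxpos
    have h := mul_le_mul_of_nonneg_left (tail_upper hxpos) hex.le
    calc Real.exp (x ^ 2 / 2) * (∫ t in Ioi x, gphi t)
        ≤ Real.exp (x^2/2) * (gphi x / x) := h
      _ = 1 / x := by rw [mul_div_assoc', hexg]
  have hgx : |g x| ≤ K + L * x := by
    have := hgb x; rwa [abs_of_nonneg hx] at this
  have hexpr : (1 + x ^ 2) * Real.exp (x ^ 2 / 2) * (∫ t in Iic x, g t * gphi t) + x * g x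
      = g x * (x - (1 + x ^ 2) * (Real.exp (x ^ 2 / 2) * ∫ t in Ioi x, gphi t))
        - (1 + x ^ 2) * Real.exp (x ^ 2 / 2) * ∫ t in Ioi x, (g t - g x) * gphi t := by
    rw [hIic, hsplit]; ring
  rw [hexpr]
  exact steinBound_core L K x (∫ t in Ioi x, gphi t) (∫ t in Ioi x, (g t - g x) * gphi t)
    (g x) hL hK hx (tail_nonneg x) hQlow hQhigh (tail_le_total x) hgx hEbound

lemma hasDerivAt_expsq (x : ℝ) :
    HasDerivAt (fun x : ℝ => Real.exp (x ^ 2 / 2)) (x * Real.exp (x ^ 2 / 2)) x := by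
  have h1 : HasDerivAt (fun t : ℝ => t ^ 2 / 2) x x := by
    have := (hasDerivAt_pow 2 x : HasDerivAt (fun x : ℝ => x ^ 2) _ x).div_const 2
    exact this.congr_deriv (by norm_num)
  have h2 := h1.exp
  convert h2 using 1
  ring

/-- Stein solution: existence of f with derivative data and second-derivative bound. -/
lemma stein_solution (g : ℝ → ℝ) (L K : ℝ) (hL : 0 ≤ L) (hK : 0 ≤ K)
    (hgd : Differentiable ℝ g) (hg'b : ∀ x, |deriv g x| ≤ L)
    (hlip : ∀ s t, |g s - g t| ≤ L * |s - t|)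
    (hgb : ∀ t, |g t| ≤ K + L * |t|)
    (hint : Integrable (fun t => g t * gphi t))
    (htot : ∫ t : ℝ, g t * gphi t = 0) :
    ∃ f f₁ f₂ : ℝ → ℝ,
      (∀ x, f₁ x - x * f x = g x) ∧
      (∀ x, HasDerivAt f (f₁ x) x) ∧
      (∀ x, HasDerivAt f₁ (f₂ x) x) ∧
      (∀ x, |f₂ x| ≤ 2 * L + (K + L) * (1 + 2 * Real.exp 1 * Real.sqrt (2 * π))) := by
  classical
  set F : ℝ → ℝ := fun x => ∫ t in Iic x, g t * gphi t with hF
  set f : ℝ → ℝ := fun x => Real.exp (x ^ 2 / 2) * F x with hf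
  set f₁ : ℝ → ℝ := fun x => x * f x + g x with hf₁
  set f₂ : ℝ → ℝ := fun x => f x + x * f₁ x + deriv g x with hf₂
  have hgc : Continuous g := hgd.continuous
  have hintc : Continuous fun t => g t * gphi t := hgc.mul gphi_cont
  have hFd : ∀ x, HasDerivAt F (g x * gphi x) x := by
    intro x
    have hrepr : F = fun u => F 0 + ∫ t in (0:ℝ)..u, g t * gphi t := by
      funext u
      rw [hF]
      have := integral_Iic_sub_Iic (μ := volume) (f := fun t => g t * gphi t)
        (hint.integrableOn) (hint.integrableOn) (a := 0) (b := u)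
      simp only at this ⊢
      linarith
    rw [hrepr]
    have hD : HasDerivAt (fun u => ∫ t in (0:ℝ)..u, g t * gphi t) (g x * gphi x) x :=
      intervalIntegral.integral_hasDerivAt_right
        hint.intervalIntegrable
        hintc.aestronglyMeasurable.stronglyMeasurableAtFilter
        hintc.continuousAt
    simpa using hD.const_add (F 0)
  have hfd : ∀ x, HasDerivAt f (f₁ x) x := by
    intro x
    have := (hasDerivAt_expsq x).mul (hFd x)
    rw [hf₁]
    refine this.congr_deriv ?_
    have h1 : Real.exp (x ^ 2 / 2) * (g x * gphi x)
        = g x * (Real.exp (x ^ 2 / 2) * gphi x) := by ring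
    simp only [hf]
    rw [h1, exp_mul_gphi, mul_one]
    ring
  have hf₁d : ∀ x, HasDerivAt f₁ (f₂ x) x := by
    intro x
    have h1 : HasDerivAt (fun x => x * f x) (1 * f x + x * f₁ x) x :=
      (hasDerivAt_id x).mul (hfd x)
    have h2 := h1.add ((hgd x).hasDerivAt)
    rw [hf₂]
    exact h2.congr_deriv (by beta_reduce; ring)
  have hbound : ∀ x, |f₂ x| ≤ 2 * L + (K + L) * (1 + 2 * Real.exp 1 * Real.sqrt (2 * π)) := by
    intro x
    have hcore : |(1 + x ^ 2) * Real.exp (x ^ 2 / 2) * F x + x * g x|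
        ≤ L + (K + L) * (1 + 2 * Real.exp 1 * Real.sqrt (2 * π)) := by
      rcases le_or_gt 0 x with hx | hx
      · exact steinBound g L K hL hK hlip hgb hint htot x hx
      · -- reflection
        set y : ℝ := -x with hy
        have hy0 : 0 ≤ y := by rw [hy]; linarith
        have hrefl := steinBound (fun t => g (-t)) L K hL hK
          (fun s t => by
            have hst := hlip (-s) (-t)
            rwa [show (-s : ℝ) - -t = -(s - t) by ring, abs_neg] at hst)
          (fun t => by simpa using hgb (-t))
          (by
            have : (fun t => g (-t) * gphi t) = fun t => (fun s => g s * gphi s) (-t) := by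
              funext t; simp [gphi_neg]
            rw [this]
            exact hint.comp_neg)
          (by
            have h5 := integral_neg_eq_self (μ := volume) (f := fun s : ℝ => g s * gphi s)
            simp only [gphi_neg] at h5
            rw [htot] at h5
            exact h5)
          y hy0
        have hIic_eq : ∫ t in Iic y, g (-t) * gphi t = ∫ t in Ioi x, g t * gphi t := by
          have h2 := integral_comp_neg_Iic y (fun s => g s * gphi s)
          have h3 : ∫ t in Iic y, g (-t) * gphi t = ∫ t in Iic y, g (-t) * gphi (-t) :=
            setIntegral_congr_fun measurableSet_Iic (fun t _ => by rw [gphi_neg])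
          rw [h3]
          rw [show (-y : ℝ) = x by rw [hy]; ring] at h2
          exact h2
        have hIoi : ∫ t in Ioi x, g t * gphi t = - F x := by
          have h := integral_Iic_add_Ioi (μ := volume) (f := fun t => g t * gphi t) (b := x)
            hint.integrableOn hint.integrableOn
          rw [htot] at h
          simp only [hF]
          linarith
        have heq : (1 + y ^ 2) * Real.exp (y ^ 2 / 2) * (∫ t in Iic y, g (-t) * gphi t)
              + y * g (-y)
            = -((1 + x ^ 2) * Real.exp (x ^ 2 / 2) * F x + x * g x) := by
          rw [hIic_eq, hIoi]
          have hyx : y ^ 2 = x ^ 2 := by rw [hy]; ring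
          rw [hyx]
          have : g (-y) = g x := by rw [hy]; norm_num
          rw [this, hy]
          ring
        rw [heq, abs_neg] at hrefl
        exact hrefl
    have hf₂eq : f₂ x = ((1 + x ^ 2) * Real.exp (x ^ 2 / 2) * F x + x * g x) + deriv g x := by
      simp only [hf₂, hf₁, hf]
      ring
    rw [hf₂eq]
    calc |((1 + x ^ 2) * Real.exp (x ^ 2 / 2) * F x + x * g x) + deriv g x|
        ≤ |(1 + x ^ 2) * Real.exp (x ^ 2 / 2) * F x + x * g x| + |deriv g x| := abs_add_le _ _
      _ ≤ (L + (K + L) * (1 + 2 * Real.exp 1 * Real.sqrt (2 * π))) + L := by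
          have := hg'b x; linarith [hcore]
      _ = 2 * L + (K + L) * (1 + 2 * Real.exp 1 * Real.sqrt (2 * π)) := by ring
  exact ⟨f, f₁, f₂, fun x => by simp only [hf₁]; ring, hfd, hf₁d, hbound⟩

lemma lip_of_deriv (f f' : ℝ → ℝ) (B : ℝ) (hd : ∀ x, HasDerivAt f (f' x) x)
    (hb : ∀ x, |f' x| ≤ B) : ∀ u v : ℝ, |f v - f u| ≤ B * |v - u| := by
  intro u v
  have := Convex.norm_image_sub_le_of_norm_hasDerivWithin_le (s := (univ : Set ℝ))
    (f := f) (f' := f') (fun x _ => (hd x).hasDerivWithinAt)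
    (fun x _ => by simpa [Real.norm_eq_abs] using hb x) convex_univ (mem_univ u) (mem_univ v)
  simpa [Real.norm_eq_abs] using this

lemma taylor_bound (f f₁ f₂ : ℝ → ℝ) (B : ℝ) (hB : 0 ≤ B)
    (hfd : ∀ x, HasDerivAt f (f₁ x) x) (hf₁d : ∀ x, HasDerivAt f₁ (f₂ x) x)
    (hb : ∀ x, |f₂ x| ≤ B) : ∀ u d : ℝ, |f (u + d) - f u - d * f₁ u| ≤ B * d ^ 2 := by
  intro u d
  have hlip := lip_of_deriv f₁ f₂ B hf₁d hb
  have hmem : ∀ t ∈ uIcc u (u + d), |t - u| ≤ |d| := by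
    intro t ht
    rw [Set.mem_uIcc] at ht
    rw [abs_le]
    constructor <;> rcases ht with ⟨h1, h2⟩ | ⟨h1, h2⟩ <;>
      [skip; skip; skip; skip] <;> cases le_or_gt 0 d <;>
        first
        | (rw [abs_of_nonneg (by assumption)]; linarith)
        | (rw [abs_of_neg (by assumption)]; linarith)
  have key := Convex.norm_image_sub_le_of_norm_hasDerivWithin_le
    (f := fun t => f t - t * f₁ u) (f' := fun t => f₁ t - f₁ u)
    (s := uIcc u (u + d)) (C := B * |d|)
    (fun t _ => by
      have hh := ((hfd t).fun_sub ((hasDerivAt_id t).mul_const (f₁ u))).hasDerivWithinAt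
        (s := uIcc u (u + d))
      simpa using hh)
    (fun t ht => by
      rw [Real.norm_eq_abs]
      calc |f₁ t - f₁ u| ≤ B * |t - u| := hlip u t
        _ ≤ B * |d| := mul_le_mul_of_nonneg_left (hmem t ht) hB)
    (convex_uIcc _ _) left_mem_uIcc right_mem_uIcc
  rw [Real.norm_eq_abs, Real.norm_eq_abs] at key
  have h1 : f (u + d) - (u + d) * f₁ u - (f u - u * f₁ u) = f (u + d) - f u - d * f₁ u := by
    ring
  have h2 : u + d - u = d := by ring
  rw [h1, h2] at key
  calc |f (u + d) - f u - d * f₁ u| ≤ B * |d| * |d| := key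
    _ = B * d ^ 2 := by rw [mul_assoc, abs_mul_abs_self]; ring

lemma hasSum_poisson (α : ℝ) :
    HasSum (fun n : ℕ => Real.exp (-α) * α ^ n / n.factorial) 1 := by
  have hs : HasSum (fun n : ℕ => α ^ n / n.factorial) (Real.exp α) := by
    rw [Real.exp_eq_exp_ℝ]
    exact NormedSpace.expSeries_div_hasSum_exp α
  have := hs.mul_left (Real.exp (-α))
  rw [show Real.exp (-α) * Real.exp α = 1 by rw [← Real.exp_add]; simp] at this
  refine this.congr_fun fun n => by ring

lemma summable_poisson (α c : ℝ) (hα : 0 ≤ α) (u : ℕ → ℝ)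
    (hu : ∀ n, |u n| ≤ c * (1 + (n:ℝ)) ^ 4) :
    Summable (fun n : ℕ => Real.exp (-α) * α ^ n / n.factorial * u n) := by
  have hc : 0 ≤ c := by
    have h0 := (abs_nonneg (u 0)).trans (hu 0)
    norm_num at h0
    exact h0
  apply Summable.of_norm
  have hbig := (Real.summable_pow_div_factorial (16 * α)).mul_left (Real.exp (-α) * c)
  refine Summable.of_nonneg_of_le (fun n => norm_nonneg _) (fun n => ?_) hbig
  rw [Real.norm_eq_abs, abs_mul, abs_div, abs_mul, abs_of_nonneg (Real.exp_pos (-α)).le,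
    abs_of_nonneg (pow_nonneg hα n), abs_of_nonneg (by positivity : (0:ℝ) ≤ (n.factorial : ℝ))]
  have hpow : (1 + (n:ℝ)) ^ 4 * α ^ n ≤ (16 * α) ^ n := by
    have h1 : (1 + (n:ℝ)) ≤ 2 ^ n := by
      have := Nat.lt_two_pow_self (n := n)
      have h2 : ((n:ℝ) + 1) ≤ ((2:ℕ) ^ n : ℕ) := by exact_mod_cast Nat.lt_two_pow_self (n := n)
      push_cast at h2 ⊢
      linarith
    have h2 : (1 + (n:ℝ)) ^ 4 ≤ 16 ^ n := by
      calc (1 + (n:ℝ)) ^ 4 ≤ (2 ^ n) ^ 4 := by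
            apply pow_le_pow_left₀ (by positivity) h1
        _ = 16 ^ n := by
            rw [← pow_mul, mul_comm, pow_mul]
            norm_num
    calc (1 + (n:ℝ)) ^ 4 * α ^ n ≤ 16 ^ n * α ^ n :=
          mul_le_mul_of_nonneg_right h2 (pow_nonneg hα n)
      _ = (16 * α) ^ n := (mul_pow 16 α n).symm
  calc Real.exp (-α) * α ^ n / (n.factorial : ℝ) * |u n|
      ≤ Real.exp (-α) * α ^ n / (n.factorial : ℝ) * (c * (1 + (n:ℝ)) ^ 4) := by
        apply mul_le_mul_of_nonneg_left (hu n) (by positivity)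
    _ = Real.exp (-α) * c * ((1 + (n:ℝ)) ^ 4 * α ^ n) / (n.factorial : ℝ) := by ring
    _ ≤ Real.exp (-α) * c * ((16 * α) ^ n) / (n.factorial : ℝ) := by
        gcongr
    _ = Real.exp (-α) * c * ((16 * α) ^ n / (n.factorial : ℝ)) := by ring

lemma pois_shift (α : ℝ) (v : ℕ → ℝ)
    (h1 : Summable fun n : ℕ => Real.exp (-α) * α ^ n / n.factorial * ((n:ℝ) * v n)) :
    ∑' n : ℕ, Real.exp (-α) * α ^ n / n.factorial * ((n:ℝ) * v n)
      = α * ∑' n : ℕ, Real.exp (-α) * α ^ n / n.factorial * v (n + 1) := by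
  rw [Summable.tsum_eq_zero_add h1]
  simp only [Nat.cast_zero, zero_mul, mul_zero, zero_add, pow_zero]
  have heq : ∀ n : ℕ, Real.exp (-α) * α ^ (n+1) / (n+1).factorial * (((n:ℝ)+1) * v (n+1))
      = α * (Real.exp (-α) * α ^ n / n.factorial * v (n + 1)) := by
    intro n
    rw [Nat.factorial_succ, pow_succ]
    have hn : ((n:ℝ) + 1) ≠ 0 := by positivity
    have hf : ((n.factorial : ℝ)) ≠ 0 := by positivity
    push_cast
    field_simp
  calc ∑' n : ℕ, Real.exp (-α) * α ^ (n+1) / (n+1).factorial * ((((n+1) : ℕ):ℝ) * v (n+1))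
      = ∑' n : ℕ, α * (Real.exp (-α) * α ^ n / n.factorial * v (n + 1)) := by
        apply tsum_congr; intro n
        push_cast
        exact heq n
    _ = α * ∑' n : ℕ, Real.exp (-α) * α ^ n / n.factorial * v (n + 1) := tsum_mul_left

end PoissonNormalAux

set_option maxHeartbeats 1600000 in
/-- Normal approximation of a standardized Poisson expectation for a differentiable test
function with bounded derivative:
`E[h((X_α − α)/√α)] = E[h(Z)] + O(α^{-1/2})` as `α → ∞`, where `X_α ∼ Po(α)` and
`Z ∼ N(0,1)`. -/
theorem poisson_normal_approx_order_half (h : ℝ → ℝ)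
    (hdiff : Differentiable ℝ h) (hbdd : ∃ M : ℝ, ∀ x : ℝ, |deriv h x| ≤ M) :
    ∃ C > (0 : ℝ), ∃ A > (0 : ℝ), ∀ α : ℝ, α ≥ A →
      |(∑' n : ℕ, Real.exp (-α) * α ^ n / (n.factorial : ℝ) *
          h (((n : ℝ) - α) / Real.sqrt α)) -
        ∫ z : ℝ, h z * ((2 * Real.pi) ^ (-(1 : ℝ) / 2) * Real.exp (-z ^ 2 / 2))|
        ≤ C * α ^ (-(1 : ℝ) / 2) := by
  obtain ⟨M, hM⟩ := hbdd
  have hM0 : 0 ≤ M := (abs_nonneg _).trans (hM 0)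
  have hhd : ∀ x, HasDerivAt h (deriv h x) x := fun x => (hdiff x).hasDerivAt
  have hhlip : ∀ s t, |h s - h t| ≤ M * |s - t| := fun s t =>
    lip_of_deriv h (deriv h) M hhd hM t s
  -- the Gaussian expectation
  set c : ℝ := ∫ z : ℝ, h z * ((2 * Real.pi) ^ (-(1 : ℝ) / 2) * Real.exp (-z ^ 2 / 2)) with hc
  -- centered test function
  set g : ℝ → ℝ := fun x => h x - c with hg
  have hglip : ∀ s t, |g s - g t| ≤ M * |s - t| := by
    intro s t; simp only [hg]
    have := hhlip s t
    calc |h s - c - (h t - c)| = |h s - h t| := by ring_nf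
      _ ≤ M * |s - t| := this
  set K : ℝ := |g 0| with hK
  have hK0 : 0 ≤ K := abs_nonneg _
  have hgb : ∀ t, |g t| ≤ K + M * |t| := by
    intro t
    have h1 := hglip t 0
    have h2 : |g t| ≤ |g t - g 0| + |g 0| := by
      calc |g t| = |(g t - g 0) + g 0| := by ring_nf
        _ ≤ |g t - g 0| + |g 0| := abs_add_le _ _
    simp only [sub_zero] at h1
    linarith
  have hhb : ∀ t, |h t| ≤ (|h 0| + M) * (1 + |t|) := by
    intro t
    have h1 := hhlip t 0
    simp only [sub_zero] at h1
    have h2 : |h t| ≤ |h t - h 0| + |h 0| := by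
      calc |h t| = |(h t - h 0) + h 0| := by ring_nf
        _ ≤ |h t - h 0| + |h 0| := abs_add_le _ _
    nlinarith [abs_nonneg t, abs_nonneg (h 0)]
  -- integrability of h * gphi
  have hhint : Integrable (fun t => h t * gphi t) := by
    refine Integrable.mono'
      ((gphi_integrable.const_mul (|h 0| + M)).add
        (gphi_abs_mul_integrable.const_mul (|h 0| + M)))
      ((hdiff.continuous.mul gphi_cont).aestronglyMeasurable)
      (Eventually.of_forall fun t => ?_)
    rw [Real.norm_eq_abs, abs_mul, abs_of_nonneg (gphi_pos t).le]
    have := hhb t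
    have hb2 : |h t| * gphi t ≤ ((|h 0| + M) * (1 + |t|)) * gphi t :=
      mul_le_mul_of_nonneg_right this (gphi_pos t).le
    calc |h t| * gphi t ≤ ((|h 0| + M) * (1 + |t|)) * gphi t := hb2
      _ = (|h 0| + M) * gphi t + (|h 0| + M) * (|t| * gphi t) := by ring
  have hgint : Integrable (fun t => g t * gphi t) := by
    simp only [hg]
    have : (fun t => (h t - c) * gphi t) = fun t => h t * gphi t - c * gphi t := by
      funext t; ring
    rw [this]
    exact hhint.sub (gphi_integrable.const_mul c)
  -- total integral of g * gphi is zero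
  have hsq2pi : (0:ℝ) < Real.sqrt (2 * π) := Real.sqrt_pos.mpr (by positivity)
  have hcI : ∫ t : ℝ, h t * gphi t = c * Real.sqrt (2 * π) := by
    have hk : ((2 * Real.pi) ^ (-(1 : ℝ) / 2) : ℝ) = (Real.sqrt (2 * π))⁻¹ := by
      rw [show (-(1:ℝ)/2) = -(1/2) by norm_num, Real.rpow_neg (by positivity),
        Real.sqrt_eq_rpow]
    have : c = (Real.sqrt (2 * π))⁻¹ * ∫ t : ℝ, h t * gphi t := by
      rw [hc, ← MeasureTheory.integral_const_mul]
      congr 1 with z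
      rw [hk]
      unfold gphi
      ring
    rw [this]
    field_simp
  have htot : ∫ t : ℝ, g t * gphi t = 0 := by
    simp only [hg]
    have : (fun t => (h t - c) * gphi t) = fun t => h t * gphi t - c * gphi t := by
      funext t; ring
    rw [this, integral_sub hhint (gphi_integrable.const_mul c), MeasureTheory.integral_const_mul,
      integral_gphi, hcI]
    ring
  -- Stein solution
  have hgd : Differentiable ℝ g := hdiff.sub_const c
  have hg'b : ∀ x, |deriv g x| ≤ M := by
    intro x
    simp only [hg]
    rw [deriv_sub_const]
    exact hM x
  obtain ⟨f, f₁, f₂, hstein, hfd, hf₁d, hf₂b⟩ :=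
    stein_solution g M K hM0 hK0 hgd hg'b hglip hgb hgint htot
  set B : ℝ := 2 * M + (K + M) * (1 + 2 * Real.exp 1 * Real.sqrt (2 * π)) with hB
  have hB0 : 0 ≤ B := by
    have h1 : (0:ℝ) ≤ 1 + 2 * Real.exp 1 * Real.sqrt (2 * π) := by positivity
    have h2 : (0:ℝ) ≤ (K + M) := by linarith
    nlinarith
  have htay := taylor_bound f f₁ f₂ B hB0 hfd hf₁d hf₂b
  have hf₁lip := lip_of_deriv f₁ f₂ B hf₁d hf₂b
  -- growth bounds
  set cf : ℝ := |f 0| + |f₁ 0| + B with hcf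
  have hcf0 : 0 ≤ cf := by positivity
  have hfgrow : ∀ x : ℝ, |f x| ≤ cf * (1 + |x|) ^ 2 := by
    intro x
    have h1 := htay 0 x
    simp only [zero_add] at h1
    have h2 : |f x| ≤ |f 0| + |x| * |f₁ 0| + B * x ^ 2 := by
      have h3 : |f x| ≤ |f x - f 0 - x * f₁ 0| + |f 0 + x * f₁ 0| := by
        calc |f x| = |(f x - f 0 - x * f₁ 0) + (f 0 + x * f₁ 0)| := by ring_nf
          _ ≤ _ := abs_add_le _ _
      have h4 : |f 0 + x * f₁ 0| ≤ |f 0| + |x| * |f₁ 0| := by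
        calc |f 0 + x * f₁ 0| ≤ |f 0| + |x * f₁ 0| := abs_add_le _ _
          _ = |f 0| + |x| * |f₁ 0| := by rw [abs_mul]
      linarith
    have h5 : x ^ 2 ≤ (1 + |x|) ^ 2 := by nlinarith [abs_nonneg x, sq_abs x]
    have h6 : (1:ℝ) ≤ (1 + |x|) ^ 2 := by nlinarith [abs_nonneg x]
    have h7 : |x| ≤ (1 + |x|) ^ 2 := by nlinarith [abs_nonneg x]
    rw [hcf]
    nlinarith [abs_nonneg (f 0), abs_nonneg (f₁ 0), abs_nonneg x]
  have hf₁grow : ∀ x : ℝ, |f₁ x| ≤ (|f₁ 0| + B) * (1 + |x|) := by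
    intro x
    have h1 := hf₁lip 0 x
    simp only [sub_zero] at h1
    have h2 : |f₁ x| ≤ |f₁ x - f₁ 0| + |f₁ 0| := by
      calc |f₁ x| = |(f₁ x - f₁ 0) + f₁ 0| := by ring_nf
        _ ≤ _ := abs_add_le _ _
    nlinarith [abs_nonneg x, abs_nonneg (f₁ 0)]
  -- choose constants
  refine ⟨B + 1, by linarith, 1, one_pos, ?_⟩
  intro α hα
  have hα1 : (1:ℝ) ≤ α := hα
  have hα0 : (0:ℝ) < α := by linarith
  set s : ℝ := Real.sqrt α with hs
  have hs1 : (1:ℝ) ≤ s := by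
    rw [hs, show (1:ℝ) = Real.sqrt 1 by simp]
    exact Real.sqrt_le_sqrt hα1
  have hs0 : (0:ℝ) < s := by linarith
  have hs2 : s ^ 2 = α := Real.sq_sqrt hα0.le
  set δ : ℝ := 1 / s with hδ
  have hδ0 : 0 < δ := by positivity
  have hsδ : s * δ = 1 := by rw [hδ]; field_simp
  set W : ℕ → ℝ := fun n => ((n : ℝ) - α) / s with hW
  set p : ℕ → ℝ := fun n => Real.exp (-α) * α ^ n / (n.factorial : ℝ) with hp
  have hp0 : ∀ n, 0 ≤ p n := fun n => by
    rw [hp]; positivity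
  have hpsum : HasSum p 1 := hasSum_poisson α
  have hWsucc : ∀ n : ℕ, W (n + 1) = W n + δ := by
    intro n
    rw [hW, hδ]
    push_cast
    field_simp
    ring
  have hWb : ∀ n : ℕ, |W n| ≤ s * (1 + n) := by
    intro n
    rw [hW]
    rw [abs_div, abs_of_pos hs0, div_le_iff₀ hs0]
    have h1 : |(n:ℝ) - α| ≤ (n:ℝ) + α := by
      rw [abs_le]; constructor <;> nlinarith [Nat.cast_nonneg (α := ℝ) n]
    have h2 : (n:ℝ) + α ≤ α * (1 + n) := by nlinarith [Nat.cast_nonneg (α := ℝ) n]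
    have h3 : s * (1 + (n:ℝ)) * s = α * (1 + n) := by nlinarith [hs2]
    linarith
  have hWb2 : ∀ n : ℕ, 1 + |W n| ≤ 2 * s * (1 + n) := by
    intro n
    have h1 := hWb n
    have h2 : (1:ℝ) ≤ s * (1 + n) := by nlinarith [Nat.cast_nonneg (α := ℝ) n]
    linarith
  have hWb3 : ∀ n : ℕ, 1 + |W n + δ| ≤ 4 * s * (1 + n) := by
    intro n
    have h1 := hWb2 (n + 1)
    rw [hWsucc n] at h1
    push_cast at h1
    have h2 : (0:ℝ) < 1 + (n:ℝ) := by positivity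
    nlinarith [Nat.cast_nonneg (α := ℝ) n]
  -- summability facts
  have pow4 : ∀ x y : ℝ, 0 ≤ x → 1 ≤ y → x * y ≤ x * y ^ 4 := by
    intro x y hx hy
    nlinarith [sq_nonneg y, sq_nonneg (y - 1), sq_nonneg (y^2 - 1)]
  have h1n : ∀ n : ℕ, (1:ℝ) ≤ 1 + (n:ℝ) := fun n => by
    have : (0:ℝ) ≤ (n:ℝ) := Nat.cast_nonneg n
    linarith
  have Sh : Summable fun n => p n * h (W n) := by
    apply summable_poisson α ((|h 0| + M) * (2 * s)) hα0.le
    intro n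
    have h1 := hhb (W n)
    have h2 := hWb2 n
    have h3 : |h (W n)| ≤ (|h 0| + M) * (2 * s) * (1 + n) := by
      nlinarith [abs_nonneg (h (W n)), abs_nonneg (h 0), abs_nonneg (W n)]
    calc |h (W n)| ≤ (|h 0| + M) * (2 * s) * (1 + n) := h3
      _ ≤ (|h 0| + M) * (2 * s) * (1 + (n:ℝ)) ^ 4 :=
          pow4 _ _ (by positivity) (h1n n)
  have Sf : Summable fun n => p n * f (W n) := by
    apply summable_poisson α (cf * (2 * s) ^ 2) hα0.le
    intro n
    have h1 := hfgrow (W n)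
    have h2 := hWb2 n
    have h3 : (1 + |W n|) ^ 2 ≤ (2 * s * (1 + n)) ^ 2 := by
      apply pow_le_pow_left₀ (by positivity) h2
    have h4 : |f (W n)| ≤ cf * (2 * s) ^ 2 * ((1 + (n:ℝ)) ^ 2) := by
      have := mul_le_mul_of_nonneg_left h3 hcf0
      calc |f (W n)| ≤ cf * (1 + |W n|) ^ 2 := h1
        _ ≤ cf * (2 * s * (1 + n)) ^ 2 := this
        _ = cf * (2 * s) ^ 2 * ((1 + (n:ℝ)) ^ 2) := by ring
    calc |f (W n)| ≤ cf * (2 * s) ^ 2 * ((1 + (n:ℝ)) ^ 2) := h4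
      _ ≤ cf * (2 * s) ^ 2 * ((1 + (n:ℝ)) ^ 4) := by
          have h5 : (1 + (n:ℝ)) ^ 2 ≤ (1 + (n:ℝ)) ^ 4 :=
            pow_le_pow_right₀ (h1n n) (by norm_num)
          apply mul_le_mul_of_nonneg_left h5 (by positivity)
  have Sfd : Summable fun n => p n * f (W n + δ) := by
    apply summable_poisson α (cf * (4 * s) ^ 2) hα0.le
    intro n
    have h1 := hfgrow (W n + δ)
    have h2 := hWb3 n
    have h3 : (1 + |W n + δ|) ^ 2 ≤ (4 * s * (1 + n)) ^ 2 := by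
      apply pow_le_pow_left₀ (by positivity) h2
    have h4 : |f (W n + δ)| ≤ cf * (4 * s) ^ 2 * ((1 + (n:ℝ)) ^ 2) := by
      have := mul_le_mul_of_nonneg_left h3 hcf0
      calc |f (W n + δ)| ≤ cf * (1 + |W n + δ|) ^ 2 := h1
        _ ≤ cf * (4 * s * (1 + n)) ^ 2 := this
        _ = cf * (4 * s) ^ 2 * ((1 + (n:ℝ)) ^ 2) := by ring
    calc |f (W n + δ)| ≤ cf * (4 * s) ^ 2 * ((1 + (n:ℝ)) ^ 2) := h4
      _ ≤ cf * (4 * s) ^ 2 * ((1 + (n:ℝ)) ^ 4) := by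
          have h5 : (1 + (n:ℝ)) ^ 2 ≤ (1 + (n:ℝ)) ^ 4 :=
            pow_le_pow_right₀ (h1n n) (by norm_num)
          apply mul_le_mul_of_nonneg_left h5 (by positivity)
  have Sf1 : Summable fun n => p n * f₁ (W n) := by
    apply summable_poisson α ((|f₁ 0| + B) * (2 * s)) hα0.le
    intro n
    have h1 := hf₁grow (W n)
    have h2 := hWb2 n
    have h3 : |f₁ (W n)| ≤ (|f₁ 0| + B) * (2 * s) * (1 + n) := by
      nlinarith [abs_nonneg (f₁ 0), abs_nonneg (W n), abs_nonneg (f₁ (W n))]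
    calc |f₁ (W n)| ≤ (|f₁ 0| + B) * (2 * s) * (1 + n) := h3
      _ ≤ (|f₁ 0| + B) * (2 * s) * (1 + (n:ℝ)) ^ 4 :=
          pow4 _ _ (by positivity) (h1n n)
  have Snf : Summable fun n => p n * ((n:ℝ) * f (W n)) := by
    apply summable_poisson α (cf * (2 * s) ^ 2) hα0.le
    intro n
    have h1 := hfgrow (W n)
    have h2 := hWb2 n
    have h3 : (1 + |W n|) ^ 2 ≤ (2 * s * (1 + n)) ^ 2 :=
      pow_le_pow_left₀ (by positivity) h2 _
    have h4 : |(n:ℝ) * f (W n)| ≤ cf * (2 * s) ^ 2 * ((n:ℝ) * (1 + (n:ℝ)) ^ 2) := by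
      rw [abs_mul, abs_of_nonneg (Nat.cast_nonneg (α := ℝ) n)]
      have h5 : |f (W n)| ≤ cf * (2 * s) ^ 2 * (1 + (n:ℝ)) ^ 2 := by
        have := mul_le_mul_of_nonneg_left h3 hcf0
        calc |f (W n)| ≤ cf * (1 + |W n|) ^ 2 := h1
          _ ≤ cf * (2 * s * (1 + n)) ^ 2 := this
          _ = cf * (2 * s) ^ 2 * ((1 + (n:ℝ)) ^ 2) := by ring
      calc (n:ℝ) * |f (W n)| ≤ (n:ℝ) * (cf * (2 * s) ^ 2 * (1 + (n:ℝ)) ^ 2) :=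
            mul_le_mul_of_nonneg_left h5 (Nat.cast_nonneg n)
        _ = cf * (2 * s) ^ 2 * ((n:ℝ) * (1 + (n:ℝ)) ^ 2) := by ring
    calc |(n:ℝ) * f (W n)| ≤ cf * (2 * s) ^ 2 * ((n:ℝ) * (1 + (n:ℝ)) ^ 2) := h4
      _ ≤ cf * (2 * s) ^ 2 * (1 + (n:ℝ)) ^ 4 := by
          have h6 : (n:ℝ) * (1 + (n:ℝ)) ^ 2 ≤ (1 + (n:ℝ)) ^ 4 := by
            have h7 : (n:ℝ) ≤ (1 + (n:ℝ)) ^ 2 := by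
              nlinarith [Nat.cast_nonneg (α := ℝ) n]
            calc (n:ℝ) * (1 + (n:ℝ)) ^ 2 ≤ (1 + (n:ℝ)) ^ 2 * (1 + (n:ℝ)) ^ 2 :=
                  mul_le_mul_of_nonneg_right h7 (by positivity)
              _ = (1 + (n:ℝ)) ^ 4 := by ring
          apply mul_le_mul_of_nonneg_left h6 (by positivity)
  -- the tsum computation
  have hpc : ∑' n, p n * c = c := by
    rw [tsum_mul_right, hpsum.tsum_eq, one_mul]
  have E4 : (∑' n, p n * h (W n)) - c = ∑' n, p n * g (W n) := by
    have hgW : ∀ n, p n * g (W n) = p n * h (W n) - p n * c := by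
      intro n; simp only [hg]; ring
    rw [show (∑' n, p n * g (W n)) = ∑' n, (p n * h (W n) - p n * c) from tsum_congr hgW]
    rw [Summable.tsum_sub Sh (hpsum.summable.mul_right c), hpc]
  have E3 : ∑' n, p n * ((n:ℝ) * f (W n)) = α * ∑' n, p n * f (W n + δ) := by
    have := pois_shift α (fun n => f (W n)) (by exact Snf)
    rw [this]
    congr 1
    apply tsum_congr
    intro n
    show p n * f (W (n + 1)) = p n * f (W n + δ)
    rw [hWsucc n]
  have E2 : ∑' n, p n * g (W n)
      = (∑' n, p n * f₁ (W n)) - δ * (∑' n, p n * ((n:ℝ) * f (W n)))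
        + s * (∑' n, p n * f (W n)) := by
    have hpt : ∀ n, p n * g (W n)
        = (p n * f₁ (W n) - δ * (p n * ((n:ℝ) * f (W n)))) + s * (p n * f (W n)) := by
      intro n
      have h1 : g (W n) = f₁ (W n) - W n * f (W n) := (hstein (W n)).symm
      rw [h1, hW, hδ]
      have : ((n:ℝ) - α) / s = (n:ℝ) / s - α / s := by ring
      have hαs : α / s = s := by
        rw [← hs2]; field_simp
      field_simp
      ring_nf
      rw [← hs2]
      ring
    rw [show (∑' n, p n * g (W n)) = _ from tsum_congr hpt]
    rw [Summable.tsum_add (Summable.sub Sf1 ((Snf).mul_left δ)) ((Sf).mul_left s),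
      Summable.tsum_sub Sf1 ((Snf).mul_left δ), tsum_mul_left, tsum_mul_left]
  -- remainder
  set r : ℕ → ℝ := fun n => f (W n + δ) - f (W n) - δ * f₁ (W n) with hr
  have hrb : ∀ n, |r n| ≤ B * δ ^ 2 := fun n => htay (W n) δ
  have Sr : Summable fun n => p n * r n := by
    have : (fun n => p n * r n)
        = fun n => (p n * f (W n + δ) - p n * f (W n)) - δ * (p n * f₁ (W n)) := by
      funext n; rw [hr]; ring
    rw [this]
    exact (Sfd.sub Sf).sub (Sf1.mul_left δ)
  have Er : ∑' n, p n * r n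
      = (∑' n, p n * f (W n + δ)) - (∑' n, p n * f (W n)) - δ * (∑' n, p n * f₁ (W n)) := by
    have : (fun n => p n * r n)
        = fun n => (p n * f (W n + δ) - p n * f (W n)) - δ * (p n * f₁ (W n)) := by
      funext n; rw [hr]; ring
    rw [this, Summable.tsum_sub (Sfd.sub Sf) (Sf1.mul_left δ), Summable.tsum_sub Sfd Sf, tsum_mul_left]
  -- key identity : sum of q = -s * sum of r
  have hkey : (∑' n, p n * h (W n)) - c = -s * ∑' n, p n * r n := by
    rw [E4, E2, Er, E3]
    have hαδ : δ * α = s := by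
      rw [hδ, ← hs2]; field_simp
    have hsδ' : s * δ = 1 := hsδ
    linear_combination (-(∑' n, p n * f (W n + δ))) * hαδ + (-(∑' n, p n * f₁ (W n))) * hsδ'
  -- final bound
  have habs : |∑' n, p n * r n| ≤ B * δ ^ 2 := by
    have h1 : |∑' n, p n * r n| ≤ ∑' n, |p n * r n| := by
      have h0' : Summable fun n => ‖p n * r n‖ := by
        simp only [Real.norm_eq_abs]; exact Sr.abs
      have h1' := norm_tsum_le_tsum_norm h0'
      simp only [Real.norm_eq_abs] at h1'
      exact h1'
    have h2 : ∑' n, |p n * r n| ≤ ∑' n, p n * (B * δ ^ 2) := by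
      apply Summable.tsum_le_tsum _ (Sr.abs) (hpsum.summable.mul_right _)
      intro n
      rw [abs_mul, abs_of_nonneg (hp0 n)]
      exact mul_le_mul_of_nonneg_left (hrb n) (hp0 n)
    have h3 : ∑' n, p n * (B * δ ^ 2) = B * δ ^ 2 := by
      rw [tsum_mul_right, hpsum.tsum_eq, one_mul]
    linarith
  have hrpow : α ^ (-(1:ℝ)/2) = δ := by
    rw [hδ, hs, show (-(1:ℝ)/2) = -(1/2) by norm_num, Real.rpow_neg hα0.le,
      Real.sqrt_eq_rpow]
    exact (one_div _).symm
  have final : |(∑' n, p n * h (W n)) - c| ≤ (B + 1) * α ^ (-(1:ℝ)/2) := by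
    rw [hkey, hrpow, abs_mul, abs_neg, abs_of_pos hs0]
    have h1 : s * |∑' n, p n * r n| ≤ s * (B * δ ^ 2) :=
      mul_le_mul_of_nonneg_left habs hs0.le
    have h2 : s * (B * δ ^ 2) = B * δ := by
      rw [show s * (B * δ ^ 2) = B * δ * (s * δ) by ring, hsδ, mul_one]
    have h3 : B * δ ≤ (B + 1) * δ := by nlinarith
    linarith
  exact final
end

section
/- Fix ν > 0 and x ∈ ℝ, and define g_α(x) = (α^(α+x√α) · e^(−α) · √(2πα) / Γ(α + x√α + 1))^(ν−1) for α > 0. Then as α → ∞, g_α(x) = exp(−(ν−1)x²/2) · (1 + (ν−1)(x³−3x)/(6√α) + O(α^(−1))). Precisely: there exist constants C > 0 and A > 0 (depending on ν and x) such that for all α ≥ A, |g_α(x) − exp(−(ν−1)x²/2)·(1 + (ν−1)(x³−3x)/(6√α))| ≤ C·α^(−1). -/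
open scoped BigOperators

open Real Filter Finset Nat Topology

noncomputable def Ebin (t : ℝ) : ℝ := Real.log (Real.Gamma t) - (t - 1/2) * Real.log t + t

lemma stirling_int : Tendsto (fun n : ℕ => Real.log (n ! : ℝ) - ((n : ℝ) + 1/2) * Real.log n + n)
    atTop (𝓝 (Real.log (2*Real.pi) / 2)) := by
  have h := Stirling.tendsto_stirlingSeq_sqrt_pi.log (by positivity : Real.sqrt Real.pi ≠ 0)
  have heq : ∀ᶠ n : ℕ in atTop, Real.log (Stirling.stirlingSeq n)
      = Real.log (n ! : ℝ) - ((n : ℝ) + 1/2) * Real.log n + n - Real.log 2 / 2 := by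
    filter_upwards [eventually_ge_atTop 1] with n hn
    have hn0 : (0:ℝ) < n := by exact_mod_cast hn
    rw [Stirling.log_stirlingSeq_formula, Real.log_mul two_ne_zero (by positivity),
      Real.log_div (by positivity) (by positivity), Real.log_exp]
    ring
  have h2 := (h.congr' heq)
  have h3 := h2.add_const (Real.log 2 / 2)
  have : Real.log (Real.sqrt Real.pi) + Real.log 2 / 2 = Real.log (2*Real.pi) / 2 := by
    rw [Real.log_sqrt Real.pi_pos.le, Real.log_mul two_ne_zero Real.pi_ne_zero]
    ring
  rw [this] at h3
  exact h3.congr (by intro n; ring)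

-- (n+a) * log (1 + θ/n) → θ
lemma aux_mul_log (θ a : ℝ) :
    Tendsto (fun n : ℕ => ((n : ℝ) + a) * Real.log (1 + θ / n)) atTop (𝓝 θ) := by
  have h1 : Tendsto (fun n : ℕ => (n : ℝ) * Real.log (1 + θ / n)) atTop (𝓝 θ) :=
    (Real.tendsto_mul_log_one_add_div_atTop θ).comp tendsto_natCast_atTop_atTop
  have h2 : Tendsto (fun n : ℕ => Real.log (1 + θ / n)) atTop (𝓝 0) := by
    have : Tendsto (fun n : ℕ => 1 + θ / n) atTop (𝓝 1) := by
      have := (tendsto_const_nhds (x := θ)).div_atTop tendsto_natCast_atTop_atTop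
      simpa using (tendsto_const_nhds (x := (1:ℝ))).add this
    simpa [Function.comp_def] using (Real.continuousAt_log one_ne_zero).tendsto.comp this |>.congr (fun n => rfl)
  have := h1.add ((h2.const_mul a))
  simpa [add_mul, mul_comm] using this

lemma E_theta {θ : ℝ} (hθ0 : 0 ≤ θ) (hθ1 : θ < 1) :
    Tendsto (fun n : ℕ => Ebin ((n : ℝ) + θ)) atTop (𝓝 (Real.log (2*Real.pi) / 2)) := by
  set c := Real.log (2*Real.pi) / 2
  -- lower and upper sequences
  have hS := stirling_int
  have hLo : Tendsto (fun n : ℕ => Real.log (n ! : ℝ) - ((n:ℝ) + 1/2) * Real.log ((n:ℝ) + θ)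
      + (n:ℝ) + θ) atTop (𝓝 c) := by
    have hdiff : Tendsto (fun n : ℕ => θ - ((n:ℝ) + 1/2) * Real.log (1 + θ / n)) atTop (𝓝 0) := by
      have := (aux_mul_log θ (1/2)).const_sub θ
      simpa using this
    have := hS.add hdiff
    rw [add_zero] at this
    apply this.congr'
    filter_upwards [eventually_ge_atTop 1] with n hn
    have hn0 : (0:ℝ) < n := by exact_mod_cast hn
    have : Real.log ((n:ℝ) + θ) = Real.log n + Real.log (1 + θ / n) := by
      rw [← Real.log_mul (by positivity) (by positivity)]
      congr 1
      field_simp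
    rw [this]; ring
  have hUp : Tendsto (fun n : ℕ => Real.log (n ! : ℝ) - (1 - θ) * Real.log n
      - ((n:ℝ) + θ - 1/2) * Real.log ((n:ℝ) + θ) + (n:ℝ) + θ) atTop (𝓝 c) := by
    have hdiff : Tendsto (fun n : ℕ => θ - ((n:ℝ) + (θ - 1/2)) * Real.log (1 + θ / n))
        atTop (𝓝 0) := by
      have := (aux_mul_log θ (θ - 1/2)).const_sub θ
      simpa using this
    have := hS.add hdiff
    rw [add_zero] at this
    apply this.congr'
    filter_upwards [eventually_ge_atTop 1] with n hn
    have hn0 : (0:ℝ) < n := by exact_mod_cast hn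
    have : Real.log ((n:ℝ) + θ) = Real.log n + Real.log (1 + θ / n) := by
      rw [← Real.log_mul (by positivity) (by positivity)]
      congr 1
      field_simp
    rw [this]; ring
  refine tendsto_of_tendsto_of_tendsto_of_le_of_le' hLo hUp ?_ ?_
  · -- lower bound: log Γ(n+1) ≤ log Γ(n+θ) + (1-θ) log(n+θ)
    filter_upwards [eventually_ge_atTop 1] with n hn
    have hn0 : (0:ℝ) < n := by exact_mod_cast hn
    have hnθ : (0:ℝ) < (n:ℝ) + θ := by linarith
    have hcvx := Real.convexOn_log_Gamma.2 (Set.mem_Ioi.mpr hnθ)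
      (Set.mem_Ioi.mpr (by linarith : (0:ℝ) < (n:ℝ) + θ + 1)) hθ0 (by linarith : (0:ℝ) ≤ 1 - θ)
      (by ring)
    have hpt : θ • ((n:ℝ) + θ) + (1 - θ) • ((n:ℝ) + θ + 1) = (n:ℝ) + 1 := by
      simp only [smul_eq_mul]; ring
    rw [hpt] at hcvx
    simp only [Function.comp_apply, smul_eq_mul] at hcvx
    have hrec : Real.Gamma ((n:ℝ) + θ + 1) = ((n:ℝ) + θ) * Real.Gamma ((n:ℝ) + θ) :=
      Real.Gamma_add_one (ne_of_gt hnθ)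
    have hΓpos : 0 < Real.Gamma ((n:ℝ) + θ) := Real.Gamma_pos_of_pos hnθ
    rw [hrec, Real.log_mul (ne_of_gt hnθ) (ne_of_gt hΓpos)] at hcvx
    have hfact : Real.Gamma ((n:ℝ) + 1) = (n ! : ℝ) := by
      exact_mod_cast Real.Gamma_nat_eq_factorial n
    rw [hfact] at hcvx
    -- hcvx : log n! ≤ θ * log Γ(n+θ) + (1-θ)*(log(n+θ) + log Γ(n+θ))
    simp only [Ebin]
    nlinarith [hcvx]
  · -- upper bound: log Γ(n+θ) ≤ (1-θ) log Γ(n) + θ log Γ(n+1)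
    filter_upwards [eventually_ge_atTop 1] with n hn
    have hn0 : (0:ℝ) < n := by exact_mod_cast hn
    have hnθ : (0:ℝ) < (n:ℝ) + θ := by linarith
    have hcvx := Real.convexOn_log_Gamma.2 (Set.mem_Ioi.mpr hn0)
      (Set.mem_Ioi.mpr (by linarith : (0:ℝ) < (n:ℝ) + 1)) (by linarith : (0:ℝ) ≤ 1 - θ) hθ0
      (by ring)
    have hpt : (1 - θ) • (n:ℝ) + θ • ((n:ℝ) + 1) = (n:ℝ) + θ := by
      simp only [smul_eq_mul]; ring
    rw [hpt] at hcvx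
    simp only [Function.comp_apply, smul_eq_mul] at hcvx
    have hfact : Real.Gamma ((n:ℝ) + 1) = (n ! : ℝ) := by
      exact_mod_cast Real.Gamma_nat_eq_factorial n
    have hrec : (n ! : ℝ) = (n:ℝ) * Real.Gamma (n:ℝ) := by
      rw [← hfact, Real.Gamma_add_one (ne_of_gt hn0)]
    have hΓpos : 0 < Real.Gamma (n:ℝ) := Real.Gamma_pos_of_pos hn0
    have hlogΓ : Real.log (Real.Gamma (n:ℝ)) = Real.log (n ! : ℝ) - Real.log n := by
      rw [hrec, Real.log_mul (ne_of_gt hn0) (ne_of_gt hΓpos)]; ring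
    rw [hfact, hlogΓ] at hcvx
    simp only [Ebin]
    nlinarith [hcvx]

lemma E_shift {t : ℝ} (ht : 1 ≤ t) :
    Tendsto (fun N : ℕ => Ebin (t + N)) atTop (𝓝 (Real.log (2*Real.pi) / 2)) := by
  set m : ℕ := ⌊t⌋₊ with hm
  set θ : ℝ := t - m with hθ
  have ht0 : (0:ℝ) ≤ t := by linarith
  have hθ0 : 0 ≤ θ := by
    have := Nat.floor_le ht0
    simp [hθ]; linarith
  have hθ1 : θ < 1 := by
    have := Nat.lt_floor_add_one t
    simp [hθ]; linarith
  have hcomp := (E_theta hθ0 hθ1).comp (tendsto_add_atTop_nat m)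
  apply hcomp.congr
  intro N
  simp only [Function.comp_apply]
  congr 1
  push_cast
  ring

lemma gstep {s : ℝ} (hs : 0 < s) :
    Ebin s - Ebin (s+1) = (s + 1/2) * Real.log (1 + 1/s) - 1 := by
  have hΓ : Real.Gamma (s+1) = s * Real.Gamma s := Real.Gamma_add_one (ne_of_gt hs)
  have hΓpos : 0 < Real.Gamma s := Real.Gamma_pos_of_pos hs
  have hlog : Real.log (Real.Gamma (s+1)) = Real.log s + Real.log (Real.Gamma s) := by
    rw [hΓ, Real.log_mul (ne_of_gt hs) (ne_of_gt hΓpos)]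
  have hlog2 : Real.log (1 + 1/s) = Real.log (s+1) - Real.log s := by
    rw [← Real.log_div (by positivity) (ne_of_gt hs)]
    congr 1
    field_simp
  simp only [Ebin, hlog, hlog2]
  ring

lemma telescope {t : ℝ} (ht : 0 < t) (N : ℕ) :
    Ebin t - Ebin (t + N) = ∑ n ∈ range N, ((t + n + 1/2) * Real.log (1 + 1/(t + n)) - 1) := by
  induction N with
  | zero => simp
  | succ N ih =>
    rw [sum_range_succ, ← ih, ← gstep (by positivity : (0:ℝ) < t + N)]
    push_cast
    ring_nf

lemma gbound {s : ℝ} (hs : 2 ≤ s) :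
    |(s + 1/2) * Real.log (1 + 1/s) - 1| ≤ 4 / s^2 := by
  have hs0 : (0:ℝ) < s := by linarith
  set u : ℝ := 1/s with hu
  have hu0 : 0 < u := by positivity
  have hu2 : u ≤ 1/2 := by rw [hu]; rw [div_le_div_iff₀ hs0 (by norm_num)]; linarith
  have habs : |(-u)| < 1 := by rw [abs_neg, abs_of_pos hu0]; linarith
  have h := Real.abs_log_sub_add_sum_range_le habs 3
  have habs2 : |(-u)| = u := by rw [abs_neg, abs_of_pos hu0]
  rw [habs2] at h
  have hsum : (∑ i ∈ range 3, (-u) ^ (i + 1) / ((i:ℝ) + 1)) = -u + u^2/2 - u^3/3 := by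
    simp [Finset.sum_range_succ]
    ring
  rw [hsum] at h
  have h1u : (1:ℝ) - -u = 1 + u := by ring
  rw [h1u] at h
  -- h : |(-u + u^2/2 - u^3/3) + log (1+u)| ≤ u^4 / (1 - u)
  have hr : |Real.log (1 + u) - (u - u^2/2 + u^3/3)| ≤ 2 * u^4 := by
    have h1 : u^4 / (1 - u) ≤ 2 * u^4 := by
      rw [div_le_iff₀ (by linarith)]
      nlinarith [pow_pos hu0 4]
    calc |Real.log (1 + u) - (u - u^2/2 + u^3/3)|
        = |(-u + u^2/2 - u^3/3) + Real.log (1+u)| := by ring_nf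
      _ ≤ u^4 / (1 - u) := h
      _ ≤ 2 * u^4 := h1
  -- now main bound
  have hkey : (s + 1/2) * (u - u^2/2 + u^3/3) - 1 = 1/(12*s^2) + 1/(6*s^3) := by
    rw [hu]; field_simp; ring
  have hfin : |(s + 1/2) * Real.log (1 + 1/s) - 1| ≤
      1/(12*s^2) + 1/(6*s^3) + (s + 1/2) * (2 * u^4) := by
    have : (s + 1/2) * Real.log (1 + 1/s) - 1
        = ((s + 1/2) * (u - u^2/2 + u^3/3) - 1)
          + (s + 1/2) * (Real.log (1 + u) - (u - u^2/2 + u^3/3)) := by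
      rw [hu]; ring
    rw [this, hkey]
    have h2 : |(s + 1/2) * (Real.log (1 + u) - (u - u^2/2 + u^3/3))| ≤ (s+1/2) * (2*u^4) := by
      rw [abs_mul, abs_of_pos (by linarith : (0:ℝ) < s + 1/2)]
      exact mul_le_mul_of_nonneg_left hr (by linarith)
    calc |1/(12*s^2) + 1/(6*s^3) + (s + 1/2) * (Real.log (1 + u) - (u - u^2/2 + u^3/3))|
        ≤ |1/(12*s^2) + 1/(6*s^3)| + |(s + 1/2) * (Real.log (1 + u) - (u - u^2/2 + u^3/3))| :=
          abs_add_le _ _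
      _ ≤ 1/(12*s^2) + 1/(6*s^3) + (s+1/2) * (2*u^4) := by
          rw [abs_of_pos (by positivity)]
          linarith [h2]
  refine hfin.trans ?_
  have e1 : 1/(12*s^2) ≤ 1/s^2 := by
    rw [div_le_div_iff₀ (by positivity) (by positivity)]; nlinarith
  have e2 : 1/(6*s^3) ≤ 1/s^2 := by
    rw [div_le_div_iff₀ (by positivity) (by positivity)]; nlinarith
  have e3 : (s + 1/2) * (2*u^4) ≤ 2/s^2 := by
    have : (s + 1/2) * (2*u^4) = (2*s + 1) / s^4 := by rw [hu]; field_simp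
    rw [this, div_le_div_iff₀ (by positivity) (by positivity)]
    have h2s : 2*s ≤ s^2 := by nlinarith
    nlinarith [pow_pos hs0 2, mul_le_mul_of_nonneg_left h2s (le_of_lt (pow_pos hs0 2))]
  have : 4 / s^2 = 1/s^2 + 1/s^2 + 2/s^2 := by ring
  rw [this]
  linarith

lemma sumbound {t : ℝ} (ht : 2 ≤ t) (N : ℕ) :
    |∑ n ∈ range N, ((t + n + 1/2) * Real.log (1 + 1/(t + n)) - 1)| ≤ 8 / t := by
  have key : ∀ N : ℕ, ∑ n ∈ range N, (4 / (t + n)^2) ≤ 4/(t-1) - 4/(t+N-1) := by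
    intro N
    induction N with
    | zero => simp
    | succ N ih =>
      rw [sum_range_succ]
      have h1 : 4 / (t + N)^2 ≤ 4/(t+N-1) - 4/(t+N) := by
        have hN : (0:ℝ) ≤ N := Nat.cast_nonneg N
        have hp1 : (0:ℝ) < t + N - 1 := by linarith
        have hp2 : (0:ℝ) < t + N := by linarith
        have e : 4/(t+N-1) - 4/(t+N) = 4/((t+N-1)*(t+N)) := by
          field_simp
          ring
        rw [e, div_le_div_iff₀ (by positivity) (by positivity)]
        nlinarith
      have e2 : t + ((N:ℝ) + 1) - 1 = t + N := by ring
      push_cast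
      rw [e2]
      linarith
  calc |∑ n ∈ range N, ((t + n + 1/2) * Real.log (1 + 1/(t + n)) - 1)|
      ≤ ∑ n ∈ range N, |(t + n + 1/2) * Real.log (1 + 1/(t + n)) - 1| := abs_sum_le_sum_abs _ _
    _ ≤ ∑ n ∈ range N, (4 / (t + n)^2) := by
        apply sum_le_sum
        intro n _
        exact gbound (by linarith [Nat.cast_nonneg (α := ℝ) n] : 2 ≤ t + n)
    _ ≤ 4/(t-1) - 4/(t+N-1) := key N
    _ ≤ 4/(t-1) := by
        have : (0:ℝ) < t + N - 1 := by linarith [Nat.cast_nonneg (α := ℝ) N]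
        have : (0:ℝ) ≤ 4/(t+N-1) := by positivity
        linarith
    _ ≤ 8/t := by
        rw [div_le_div_iff₀ (by linarith) (by linarith)]
        nlinarith

lemma binet {t : ℝ} (ht : 2 ≤ t) : |Ebin t - Real.log (2*Real.pi) / 2| ≤ 8 / t := by
  have hlim : Tendsto (fun N : ℕ => |Ebin t - Ebin (t + N)|) atTop
      (𝓝 |Ebin t - Real.log (2*Real.pi) / 2|) :=
    ((tendsto_const_nhds.sub (E_shift (by linarith))).abs)
  refine le_of_tendsto hlim (Eventually.of_forall fun N => ?_)
  rw [telescope (by linarith) N]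
  exact sumbound ht N

lemma log_taylor3 {u : ℝ} (h : |u| ≤ 1/2) :
    |Real.log (1 + u) - (u - u^2/2 + u^3/3)| ≤ 2 * u^4 := by
  have habs : |(-u)| < 1 := by rw [abs_neg]; linarith [abs_nonneg u]
  have hle := Real.abs_log_sub_add_sum_range_le habs 3
  have hsum : (∑ i ∈ range 3, (-u) ^ (i + 1) / ((i:ℝ) + 1)) = -u + u^2/2 - u^3/3 := by
    simp [Finset.sum_range_succ]
    ring
  rw [hsum, abs_neg] at hle
  have h1u : (1:ℝ) - -u = 1 + u := by ring
  rw [h1u] at hle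
  have h4 : |u| ^ (3+1) = u^4 := by
    rw [show (3+1) = 4 from rfl, ← abs_pow]
    exact abs_of_nonneg (by positivity)
  rw [h4] at hle
  have hquot : u^4 / (1 - |u|) ≤ 2 * u^4 := by
    rw [div_le_iff₀ (by linarith [abs_nonneg u])]
    nlinarith [pow_nonneg (abs_nonneg u) 4, sq_nonneg u, pow_nonneg (sq_nonneg u) 2,
      abs_nonneg u]
  calc |Real.log (1 + u) - (u - u^2/2 + u^3/3)|
      = |(-u + u^2/2 - u^3/3) + Real.log (1+u)| := by ring_nf
    _ ≤ u^4 / (1 - |u|) := hle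
    _ ≤ 2 * u^4 := hquot

set_option maxHeartbeats 2000000 in
lemma core (x : ℝ) : ∃ K > (0:ℝ), ∀ α : ℝ, α ≥ 4 + 4*x^2 →
    |Real.log (α ^ (α + x * Real.sqrt α) * Real.exp (-α) * Real.sqrt (2 * Real.pi * α) /
        Real.Gamma (α + x * Real.sqrt α + 1))
      - (-x^2/2 + (x^3 - 3*x)/(6*Real.sqrt α))| ≤ K / α := by
  refine ⟨5*x^4 + x^2 + |x|^3 + 16, by positivity, fun α hA => ?_⟩
  have hx2 : (0:ℝ) ≤ 4*x^2 := by positivity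
  have hα4 : (4:ℝ) ≤ α := by linarith
  have hα0 : (0:ℝ) < α := by linarith
  set s : ℝ := Real.sqrt α with hs
  have hs2 : s^2 = α := Real.sq_sqrt hα0.le
  have hs0 : 0 < s := Real.sqrt_pos.mpr hα0
  have hs_ge2 : 2 ≤ s := by nlinarith
  have hxs : |x| ≤ s/2 := by nlinarith [sq_abs x, abs_nonneg x]
  have hxs' : x*s ≤ s^2/2 := by nlinarith [le_abs_self x]
  have hxs'' : -(s^2/2) ≤ x*s := by nlinarith [neg_abs_le x]
  set t : ℝ := α + x * s with htdef
  have ht_eq : t = s^2 + x*s := by rw [htdef, hs2]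
  have ht2 : 2 ≤ t := by rw [ht_eq]; nlinarith
  have ht0 : 0 < t := by linarith
  set u : ℝ := x/s with hu
  have hu2 : |u| ≤ 1/2 := by
    rw [hu, abs_div, abs_of_pos hs0, div_le_iff₀ hs0]
    linarith [hxs]
  have h1u : 0 < 1 + u := by
    have := neg_abs_le u
    linarith
  have ht_fact : t = s^2 * (1+u) := by
    rw [ht_eq, hu]; field_simp
  -- positivity of components
  have hΓpos : 0 < Real.Gamma t := Real.Gamma_pos_of_pos ht0
  have hΓ1pos : 0 < Real.Gamma (t+1) := Real.Gamma_pos_of_pos (by linarith)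
  have hrpow : (0:ℝ) < α ^ t := Real.rpow_pos_of_pos hα0 t
  have hepos : (0:ℝ) < Real.exp (-α) := Real.exp_pos _
  have hsqpos : (0:ℝ) < Real.sqrt (2*Real.pi*α) := Real.sqrt_pos.mpr (by positivity)
  -- log of S
  have hlogS : Real.log (α ^ t * Real.exp (-α) * Real.sqrt (2*Real.pi*α) / Real.Gamma (t+1))
      = t * Real.log α - α + Real.log (2*Real.pi*α)/2 - Real.log (Real.Gamma (t+1)) := by
    rw [Real.log_div (by positivity) (ne_of_gt hΓ1pos),
      Real.log_mul (by positivity) (ne_of_gt hsqpos),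
      Real.log_mul (ne_of_gt hrpow) (ne_of_gt hepos),
      Real.log_rpow hα0, Real.log_exp, Real.log_sqrt (by positivity)]
    ring
  have hΓrec : Real.log (Real.Gamma (t+1)) = Real.log t + Real.log (Real.Gamma t) := by
    rw [Real.Gamma_add_one (ne_of_gt ht0), Real.log_mul (ne_of_gt ht0) (ne_of_gt hΓpos)]
  have hlogΓ : Real.log (Real.Gamma t) = Ebin t + (t - 1/2) * Real.log t - t := by
    simp only [Ebin]; ring
  have hlogα : Real.log α = 2 * Real.log s := by
    rw [← hs2, Real.log_pow]; push_cast; ring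
  have hlogt : Real.log t = 2 * Real.log s + Real.log (1+u) := by
    rw [ht_fact, Real.log_mul (by positivity) (ne_of_gt h1u), Real.log_pow]
    push_cast; ring
  have hlog2πα : Real.log (2*Real.pi*α) = Real.log (2*Real.pi) + 2 * Real.log s := by
    rw [Real.log_mul (by positivity) (ne_of_gt hα0), hlogα]
  -- key decomposition
  set r : ℝ := Real.log (1+u) - (u - u^2/2 + u^3/3) with hrdef
  have hr : |r| ≤ 2 * u^4 := log_taylor3 hu2
  have hss4 : (4:ℝ) ≤ s^2 := by rw [hs2]; exact hα4
  have hsne : s ≠ 0 := ne_of_gt hs0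
  have hs2pos : (0:ℝ) < s^2 := pow_pos hs0 2
  have hs3pos : (0:ℝ) < s^3 := pow_pos hs0 3
  clear_value s t u r
  have hkey2 : Real.log (α ^ t * Real.exp (-α) * Real.sqrt (2*Real.pi*α) / Real.Gamma (t+1))
      = -(t + 1/2) * Real.log (1+u) + x*s + (Real.log (2*Real.pi)/2 - Ebin t) := by
    rw [hlogS, hΓrec, hlogΓ, hlogt, hlog2πα, hlogα]
    rw [show α = s^2 from hs2.symm, ht_eq]
    ring
  have hpoly : -(t + 1/2) * (u - u^2/2 + u^3/3) + x*s + x^2/2 - (x^3-3*x)/(6*s)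
      = -x^4/(3*s^2) + x^2/(4*s^2) - x^3/(6*s^3) := by
    rw [ht_eq, hu]
    field_simp
    ring
  have hkey : Real.log (α ^ t * Real.exp (-α) * Real.sqrt (2*Real.pi*α) / Real.Gamma (t+1))
      - (-x^2/2 + (x^3 - 3*x)/(6*s))
      = -(t + 1/2) * r + (-x^4/(3*s^2) + x^2/(4*s^2) - x^3/(6*s^3))
        + (Real.log (2*Real.pi)/2 - Ebin t) := by
    rw [hkey2, hrdef]
    linear_combination hpoly
  rw [hkey]
  -- bounds
  have hb1 : |-(t + 1/2) * r| ≤ 4 * x^4 / s^2 := by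
    rw [abs_mul, abs_neg, abs_of_pos (by linarith : (0:ℝ) < t + 1/2)]
    have htle : t + 1/2 ≤ 2 * s^2 := by rw [ht_eq]; linarith
    have hu4 : u^4 = x^4 / s^4 := by rw [hu, div_pow]
    calc (t + 1/2) * |r| ≤ (2*s^2) * (2*u^4) := by
          apply mul_le_mul htle hr (abs_nonneg r) (by linarith)
      _ = 4 * x^4 / s^2 := by rw [hu4]; field_simp; ring
  have hb2 : |(-x^4/(3*s^2) + x^2/(4*s^2) - x^3/(6*s^3))| ≤ (x^4 + x^2 + |x|^3) / s^2 := by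
    have e1 : |(-x^4/(3*s^2))| ≤ x^4/s^2 := by
      rw [abs_div, abs_of_pos (by linarith : (0:ℝ) < 3*s^2), abs_neg,
        abs_of_nonneg (by positivity : (0:ℝ) ≤ x^4), div_le_div_iff₀ (by linarith) hs2pos]
      nlinarith [mul_nonneg (by positivity : (0:ℝ) ≤ x^4) hs2pos.le]
    have e2 : |x^2/(4*s^2)| ≤ x^2/s^2 := by
      rw [abs_div, abs_of_pos (by linarith : (0:ℝ) < 4*s^2),
        abs_of_nonneg (sq_nonneg x), div_le_div_iff₀ (by linarith) hs2pos]
      nlinarith [mul_nonneg (sq_nonneg x) hs2pos.le]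
    have e3 : |x^3/(6*s^3)| ≤ |x|^3/s^2 := by
      rw [abs_div, abs_of_pos (by linarith : (0:ℝ) < 6*s^3),
        div_le_div_iff₀ (by linarith) hs2pos]
      have hx3 : |x^3| = |x|^3 := abs_pow x 3
      rw [hx3]
      have h23 : s^2 ≤ 6*s^3 := by nlinarith
      exact mul_le_mul_of_nonneg_left h23 (pow_nonneg (abs_nonneg x) 3)
    have := abs_add_le (-x^4/(3*s^2) + x^2/(4*s^2)) (-(x^3/(6*s^3)))
    have h2 := abs_add_le (-x^4/(3*s^2)) (x^2/(4*s^2))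
    rw [abs_neg] at this
    have hsplit : (x^4 + x^2 + |x|^3) / s^2 = x^4/s^2 + x^2/s^2 + |x|^3/s^2 := by ring
    rw [hsplit]
    calc |(-x^4/(3*s^2) + x^2/(4*s^2) - x^3/(6*s^3))|
        = |(-x^4/(3*s^2) + x^2/(4*s^2)) + (-(x^3/(6*s^3)))| := by ring_nf
      _ ≤ |(-x^4/(3*s^2) + x^2/(4*s^2))| + |x^3/(6*s^3)| := this
      _ ≤ |(-x^4/(3*s^2))| + |x^2/(4*s^2)| + |x^3/(6*s^3)| := by linarith [h2]
      _ ≤ x^4/s^2 + x^2/s^2 + |x|^3/s^2 := by linarith [e1, e2, e3]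
  have hb3 : |Real.log (2*Real.pi)/2 - Ebin t| ≤ 16 / s^2 := by
    rw [abs_sub_comm]
    refine (binet ht2).trans ?_
    rw [div_le_div_iff₀ ht0 hs2pos]
    rw [ht_eq]
    linarith
  calc |(-(t + 1/2) * r + (-x^4/(3*s^2) + x^2/(4*s^2) - x^3/(6*s^3))
        + (Real.log (2*Real.pi)/2 - Ebin t))|
      ≤ |(-(t + 1/2) * r + (-x^4/(3*s^2) + x^2/(4*s^2) - x^3/(6*s^3)))|
        + |Real.log (2*Real.pi)/2 - Ebin t| := abs_add_le _ _
    _ ≤ |-(t + 1/2) * r| + |(-x^4/(3*s^2) + x^2/(4*s^2) - x^3/(6*s^3))|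
        + |Real.log (2*Real.pi)/2 - Ebin t| := by linarith [abs_add_le (-(t + 1/2) * r) (-x^4/(3*s^2) + x^2/(4*s^2) - x^3/(6*s^3))]
    _ ≤ 4*x^4/s^2 + (x^4 + x^2 + |x|^3)/s^2 + 16/s^2 := by linarith [hb1, hb2, hb3]
    _ = (5*x^4 + x^2 + |x|^3 + 16) / α := by rw [← hs2]; ring

lemma le_of_sq_le' {a c : ℝ} (ha : 0 ≤ a) (hc : 0 ≤ c) (h : a^2 ≤ c^2) : a ≤ c := by
  nlinarith [sq_nonneg (a - c), sq_nonneg (a + c)]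

lemma sq_add_le' (a c : ℝ) : (a + c)^2 ≤ 2*a^2 + 2*c^2 := by nlinarith [sq_nonneg (a - c)]

/-- Pointwise asymptotics of the Stirling-normalized Poisson mass ratio at the rescaled point
`α + x√α`: for fixed `ν > 0` and `x ∈ ℝ`, with
`g_α(x) = (α^{α+x√α} e^{-α} √(2πα) / Γ(α+x√α+1))^{ν-1}`, one has
`g_α(x) = exp(-(ν-1)x²/2)(1 + (ν-1)(x³-3x)/(6√α) + O(α^{-1}))` as `α → ∞`. -/
theorem stirling_normalized_ratio_asymptotic (ν : ℝ) (hν : 0 < ν) (x : ℝ) :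
    ∃ C > (0 : ℝ), ∃ A > (0 : ℝ), ∀ α : ℝ, α ≥ A →
      |(α ^ (α + x * Real.sqrt α) * Real.exp (-α) * Real.sqrt (2 * Real.pi * α) /
            Real.Gamma (α + x * Real.sqrt α + 1)) ^ (ν - 1) -
        Real.exp (-(ν - 1) * x ^ 2 / 2) *
          (1 + (ν - 1) * (x ^ 3 - 3 * x) / (6 * Real.sqrt α))|
        ≤ C * α⁻¹ := by
  obtain ⟨K, hK, hcore⟩ := core x
  have hb0 : (0:ℝ) ≤ |ν - 1| := abs_nonneg _
  have hX0 : (0:ℝ) ≤ |x| := abs_nonneg _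
  set b : ℝ := |ν - 1| with hbdef
  set X : ℝ := |x| with hXdef
  set D : ℝ := b * (X^3 + 3*X) with hDdef
  have hD0 : 0 ≤ D := mul_nonneg hb0 (by positivity)
  have hbK0 : 0 ≤ b*K := mul_nonneg hb0 hK.le
  set K₂ : ℝ := D^2 + 2*(b*K)^2 + b*K with hK2def
  have hK₂0 : 0 ≤ K₂ := by positivity
  refine ⟨Real.exp (-(ν-1)*x^2/2) * K₂ + 1, ?_, 5 + 4*x^2 + D^2 + 2*b*K, ?_, fun α hA => ?_⟩
  · have := mul_nonneg (Real.exp_pos (-(ν-1)*x^2/2)).le hK₂0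
    linarith
  · positivity
  · -- setup
    have hsqD : (0:ℝ) ≤ D^2 := sq_nonneg D
    have hx20 : (0:ℝ) ≤ x^2 := sq_nonneg x
    have hA4 : α ≥ 4 + 4*x^2 := by linarith
    have h4 := hcore α hA4
    have hα1 : (1:ℝ) ≤ α := by linarith
    have hα0 : (0:ℝ) < α := by linarith
    have hαD : D^2 ≤ α := by linarith
    have hαbK : 2*b*K ≤ α := by linarith
    set s : ℝ := Real.sqrt α with hsdef
    have hs2 : s^2 = α := Real.sq_sqrt hα0.le
    have hs0 : 0 < s := Real.sqrt_pos.mpr hα0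
    have hss4 : (4:ℝ) ≤ s^2 := by rw [hs2]; linarith
    have hxs : |x| ≤ s/2 := by
      apply le_of_sq_le' (abs_nonneg x) (by linarith)
      rw [sq_abs, div_pow]
      norm_num
      linarith
    have hmx : -(s/2) ≤ x := by linarith [neg_abs_le x]
    have hxsge : -(s^2/2) ≤ x*s := by
      have h1 : (-(s/2))*s ≤ x*s := mul_le_mul_of_nonneg_right hmx hs0.le
      have h2 : (-(s/2))*s = -(s^2/2) := by ring
      linarith
    have hsD : D ≤ s := by
      apply le_of_sq_le' hD0 hs0.le
      rw [hs2]
      linarith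
    have ht0 : (0:ℝ) < α + x*s := by
      have h2 : s^2 = α := hs2
      linarith
    have hΓpos : 0 < Real.Gamma (α + x*s + 1) := Real.Gamma_pos_of_pos (by linarith)
    have hSpos : 0 < α ^ (α + x * s) * Real.exp (-α) * Real.sqrt (2*Real.pi*α) /
        Real.Gamma (α + x*s + 1) := by
      apply div_pos _ hΓpos
      have h1 : (0:ℝ) < α ^ (α + x*s) := Real.rpow_pos_of_pos hα0 _
      have h2 : (0:ℝ) < Real.exp (-α) := Real.exp_pos _
      have h3 : (0:ℝ) < Real.sqrt (2*Real.pi*α) := Real.sqrt_pos.mpr (by positivity)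
      positivity
    set L : ℝ := Real.log (α ^ (α + x * s) * Real.exp (-α) * Real.sqrt (2*Real.pi*α) /
        Real.Gamma (α + x*s + 1)) with hLdef
    set w : ℝ := (ν-1) * (L + x^2/2) with hwdef
    set δ : ℝ := (ν-1) * (x^3 - 3*x) / (6*s) with hδdef
    -- rewrite LHS
    have hrpow : (α ^ (α + x * s) * Real.exp (-α) * Real.sqrt (2*Real.pi*α) /
        Real.Gamma (α + x*s + 1)) ^ (ν - 1)
        = Real.exp (-(ν-1)*x^2/2) * Real.exp w := by
      rw [Real.rpow_def_of_pos hSpos, ← Real.exp_add, ← hLdef]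
      congr 1
      rw [hwdef]
      ring
    have hwδ : |w - δ| ≤ b*K/α := by
      have e : w - δ = (ν-1) * (L - (-x^2/2 + (x^3-3*x)/(6*s))) := by
        rw [hwdef, hδdef]; ring
      rw [e, abs_mul, ← hbdef]
      calc b * |L - (-x^2/2 + (x^3-3*x)/(6*s))| ≤ b * (K/α) :=
            mul_le_mul_of_nonneg_left h4 hb0
        _ = b*K/α := by ring
    have hδle : |δ| ≤ D/(6*s) := by
      rw [hδdef, abs_div, abs_mul, abs_of_pos (by linarith : (0:ℝ) < 6*s), ← hbdef]
      apply div_le_div_of_nonneg_right _ (by linarith)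
      · apply mul_le_mul_of_nonneg_left _ hb0
        calc |x^3 - 3*x| ≤ |x^3| + |3*x| := abs_sub _ _
          _ = X^3 + 3*X := by rw [abs_pow, abs_mul, hXdef]; norm_num
    have hδ6 : |δ| ≤ 1/6 := by
      refine hδle.trans ?_
      rw [div_le_iff₀ (by linarith : (0:ℝ) < 6*s)]
      linarith
    have hbKα : b*K/α ≤ 1/2 := by
      rw [div_le_iff₀ hα0]
      linarith
    have hw1 : |w| ≤ 1 := by
      calc |w| = |δ + (w - δ)| := by ring_nf
        _ ≤ |δ| + |w - δ| := abs_add_le _ _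
        _ ≤ 1/6 + 1/2 := by linarith
        _ ≤ 1 := by norm_num
    have hexp1 : |Real.exp w - 1 - w| ≤ w^2 := Real.abs_exp_sub_one_sub_id_le hw1
    have hw2 : w^2 ≤ (D^2 + 2*(b*K)^2)/α := by
      have habs : |w| ≤ D/(6*s) + b*K/α := by
        calc |w| = |δ + (w - δ)| := by ring_nf
          _ ≤ |δ| + |w - δ| := abs_add_le _ _
          _ ≤ D/(6*s) + b*K/α := by linarith
      have h1 : w^2 ≤ (D/(6*s) + b*K/α)^2 := by
        rw [← sq_abs w]
        apply pow_le_pow_left₀ (abs_nonneg w) habs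
      have h2 : (D/(6*s) + b*K/α)^2 ≤ 2*(D/(6*s))^2 + 2*(b*K/α)^2 := sq_add_le' _ _
      have h3 : (D/(6*s))^2 ≤ D^2/(2*α) := by
        have h6s : (6*s)^2 = 36*α := by rw [mul_pow, hs2]; norm_num
        rw [div_pow, h6s, div_le_div_iff₀ (by linarith) (by linarith)]
        have := mul_le_mul_of_nonneg_left (by linarith : 2*α ≤ 36*α) (sq_nonneg D)
        linarith
      have h4' : (b*K/α)^2 ≤ (b*K)^2/α := by
        rw [div_pow, div_le_div_iff₀ (by positivity) hα0]
        have hαα : α*1 ≤ α*α := mul_le_mul_of_nonneg_left hα1 hα0.le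
        have := mul_le_mul_of_nonneg_left (by linarith : α ≤ α^2) (sq_nonneg (b*K))
        linarith
      calc w^2 ≤ 2*(D/(6*s))^2 + 2*(b*K/α)^2 := le_trans h1 h2
        _ ≤ 2*(D^2/(2*α)) + 2*((b*K)^2/α) := by linarith
        _ = (D^2 + 2*(b*K)^2)/α := by ring
    have hfinal : |Real.exp w - (1 + δ)| ≤ K₂/α := by
      calc |Real.exp w - (1 + δ)| = |(Real.exp w - 1 - w) + (w - δ)| := by ring_nf
        _ ≤ |Real.exp w - 1 - w| + |w - δ| := abs_add_le _ _
        _ ≤ w^2 + b*K/α := by linarith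
        _ ≤ (D^2 + 2*(b*K)^2)/α + b*K/α := by linarith
        _ = K₂/α := by rw [hK2def]; ring
    rw [hrpow]
    have egoal : Real.exp (-(ν-1)*x^2/2) * Real.exp w
        - Real.exp (-(ν - 1) * x ^ 2 / 2) * (1 + δ)
        = Real.exp (-(ν-1)*x^2/2) * (Real.exp w - (1 + δ)) := by ring
    rw [egoal, abs_mul, abs_of_pos (Real.exp_pos _)]
    calc Real.exp (-(ν-1)*x^2/2) * |Real.exp w - (1 + δ)|
        ≤ Real.exp (-(ν-1)*x^2/2) * (K₂/α) :=
          mul_le_mul_of_nonneg_left hfinal (Real.exp_pos _).le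
      _ = (Real.exp (-(ν-1)*x^2/2) * K₂) * α⁻¹ := by ring
      _ ≤ (Real.exp (-(ν-1)*x^2/2) * K₂ + 1) * α⁻¹ := by
          apply mul_le_mul_of_nonneg_right _ (by positivity)
          linarith
end
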